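/- arXiv:2601.11555 — 9 statements merged into one kernel-verified Lean document; each statement's English description precedes it below -/
import Mathlib

section
/- Suppose at least one of the sets S_1, …, S_k, C_1, …, C_m is bounded. Then the generalized (k,m)-Heron problem has an optimal solution: there exists a point Z* = (x_1*, …, x_k*, y_1*, …, y_m*) in the feasible set A such that F(Z*) ≤ F(Z) for every Z ∈ A. -/
open scoped RealInnerProductSpace

/-- **Existence of an optimal solution for the generalized (k,m)-Heron problem.**
If at least one of the sets `S 1, …, S k, C 1, …, C m` is bounded, then there is a
feasible point `Z* = (x*, y*)` minimizing `F(x,y) = ∑ i ∑ j ‖x i - y j‖` over the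
feasible set. -/
theorem generalized_km_Heron_existence
    (n k m : ℕ) (hn : 0 < n) (hk : 0 < k) (hm : 0 < m)
    (S : Fin k → Set (EuclideanSpace ℝ (Fin n)))
    (C : Fin m → Set (EuclideanSpace ℝ (Fin n)))
    (hSne : ∀ i, (S i).Nonempty) (hScl : ∀ i, IsClosed (S i)) (hScv : ∀ i, Convex ℝ (S i))
    (hCne : ∀ j, (C j).Nonempty) (hCcl : ∀ j, IsClosed (C j)) (hCcv : ∀ j, Convex ℝ (C j))
    (hbdd : (∃ i, Bornology.IsBounded (S i)) ∨ (∃ j, Bornology.IsBounded (C j))) :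
    ∃ (x : Fin k → EuclideanSpace ℝ (Fin n)) (y : Fin m → EuclideanSpace ℝ (Fin n)),
      (∀ i, x i ∈ S i) ∧ (∀ j, y j ∈ C j) ∧
      ∀ (x' : Fin k → EuclideanSpace ℝ (Fin n)) (y' : Fin m → EuclideanSpace ℝ (Fin n)),
        (∀ i, x' i ∈ S i) → (∀ j, y' j ∈ C j) →
        ∑ i, ∑ j, ‖x i - y j‖ ≤ ∑ i, ∑ j, ‖x' i - y' j‖ := by
  classical
  set F : (Fin k → EuclideanSpace ℝ (Fin n)) × (Fin m → EuclideanSpace ℝ (Fin n)) → ℝ :=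
    fun p => ∑ i, ∑ j, ‖p.1 i - p.2 j‖ with hF
  have hFcont : Continuous F := by
    apply continuous_finset_sum
    intro i _
    apply continuous_finset_sum
    intro j _
    exact (((continuous_apply i).comp continuous_fst).sub
      ((continuous_apply j).comp continuous_snd)).norm
  set A : Set ((Fin k → EuclideanSpace ℝ (Fin n)) × (Fin m → EuclideanSpace ℝ (Fin n))) :=
    (Set.univ.pi S) ×ˢ (Set.univ.pi C) with hA
  have hmemA : ∀ p, p ∈ A ↔ (∀ i, p.1 i ∈ S i) ∧ ∀ j, p.2 j ∈ C j := by
    intro p; simp [hA, Set.mem_pi]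
  have hAcl : IsClosed A :=
    (isClosed_set_pi fun i _ => hScl i).prod (isClosed_set_pi fun j _ => hCcl j)
  choose x0 hx0 using hSne
  choose y0 hy0 using hCne
  have hp0A : (x0, y0) ∈ A := (hmemA _).2 ⟨hx0, hy0⟩
  set M : ℝ := F (x0, y0) with hM
  have hM0 : 0 ≤ M := Finset.sum_nonneg fun i _ => Finset.sum_nonneg fun j _ => norm_nonneg _
  set K : Set ((Fin k → EuclideanSpace ℝ (Fin n)) × (Fin m → EuclideanSpace ℝ (Fin n))) :=
    A ∩ {p | F p ≤ M} with hK
  have hp0K : (x0, y0) ∈ K := ⟨hp0A, le_refl M⟩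
  have hKcl : IsClosed K := hAcl.inter (isClosed_le hFcont continuous_const)
  have hterm : ∀ p ∈ K, ∀ i j, ‖p.1 i - p.2 j‖ ≤ M := by
    intro p hp i j
    refine le_trans ?_ hp.2
    calc ‖p.1 i - p.2 j‖ ≤ ∑ j', ‖p.1 i - p.2 j'‖ :=
          Finset.single_le_sum (f := fun j' => ‖p.1 i - p.2 j'‖)
            (fun j' _ => norm_nonneg _) (Finset.mem_univ j)
      _ ≤ F p := Finset.single_le_sum (f := fun i' => ∑ j', ‖p.1 i' - p.2 j'‖)
          (fun i' _ => Finset.sum_nonneg fun j' _ => norm_nonneg _) (Finset.mem_univ i)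
  have hKbdd : Bornology.IsBounded K := by
    rw [isBounded_iff_forall_norm_le]
    obtain ⟨i0, hi0⟩ | ⟨j0, hj0⟩ := hbdd
    · obtain ⟨r, hr⟩ := isBounded_iff_forall_norm_le.1 hi0
      have hr0 : 0 ≤ r := le_trans (norm_nonneg _) (hr _ (hx0 i0))
      refine ⟨r + 2 * M, ?_⟩
      intro p hp
      have hpA := (hmemA p).1 hp.1
      have hx : ∀ j, ‖p.2 j‖ ≤ r + M := by
        intro j
        have h1 : ‖p.2 j‖ - ‖p.1 i0‖ ≤ ‖p.1 i0 - p.2 j‖ := by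
          have := norm_sub_norm_le (p.2 j) (p.1 i0)
          rwa [norm_sub_rev] at this
        linarith [hr _ (hpA.1 i0), hterm p hp i0 j]
      have hy : ∀ i, ‖p.1 i‖ ≤ r + 2 * M := by
        intro i
        have j0 : Fin m := ⟨0, hm⟩
        have h1 : ‖p.1 i‖ - ‖p.2 j0‖ ≤ ‖p.1 i - p.2 j0‖ := norm_sub_norm_le _ _
        linarith [hx j0, hterm p hp i j0]
      rw [Prod.norm_def]
      refine max_le ((pi_norm_le_iff_of_nonneg (by linarith)).2 hy)
        ((pi_norm_le_iff_of_nonneg (by linarith)).2 fun j => by linarith [hx j])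
    · obtain ⟨r, hr⟩ := isBounded_iff_forall_norm_le.1 hj0
      have hr0 : 0 ≤ r := le_trans (norm_nonneg _) (hr _ (hy0 j0))
      refine ⟨r + 2 * M, ?_⟩
      intro p hp
      have hpA := (hmemA p).1 hp.1
      have hx : ∀ i, ‖p.1 i‖ ≤ r + M := by
        intro i
        have h1 : ‖p.1 i‖ - ‖p.2 j0‖ ≤ ‖p.1 i - p.2 j0‖ := norm_sub_norm_le _ _
        linarith [hr _ (hpA.2 j0), hterm p hp i j0]
      have hy : ∀ j, ‖p.2 j‖ ≤ r + 2 * M := by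
        intro j
        have i0 : Fin k := ⟨0, hk⟩
        have h1 : ‖p.2 j‖ - ‖p.1 i0‖ ≤ ‖p.1 i0 - p.2 j‖ := by
          have := norm_sub_norm_le (p.2 j) (p.1 i0)
          rwa [norm_sub_rev] at this
        linarith [hx i0, hterm p hp i0 j]
      rw [Prod.norm_def]
      refine max_le ((pi_norm_le_iff_of_nonneg (by linarith)).2 fun i => by linarith [hx i])
        ((pi_norm_le_iff_of_nonneg (by linarith)).2 hy)
  have hKcp : IsCompact K := Metric.isCompact_of_isClosed_isBounded hKcl hKbdd
  obtain ⟨p, hpK, hpmin⟩ := hKcp.exists_isMinOn ⟨(x0, y0), hp0K⟩ hFcont.continuousOn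
  have hpA := (hmemA p).1 hpK.1
  refine ⟨p.1, p.2, hpA.1, hpA.2, ?_⟩
  intro x' y' hx' hy'
  have hq : (x', y') ∈ A := (hmemA _).2 ⟨hx', hy'⟩
  show F p ≤ F (x', y')
  rcases le_or_gt (F (x', y')) M with h | h
  · exact isMinOn_iff.1 hpmin (x', y') ⟨hq, h⟩
  · exact le_trans hpK.2 h.le
end

section
/- Let S ⊆ ℝ^n be a nonempty closed convex set and let x_1, …, x_N be points such that, for some v ∈ ℝ^n and c ∈ ℝ, ⟨v, x_i⟩ < c for all i and ⟨v, s⟩ > c for all s ∈ S. If x̄ lies in the interior of S, then x̄ is not a minimizer of D(x) = Σ_{i=1}^N ‖x − x_i‖ over S; that is, there exists x ∈ S with D(x) < D(x̄). -/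
open scoped RealInnerProductSpace

/-- If the points `x 1, …, x N` and the nonempty closed convex set `S` are strictly
separated by the hyperplane `{z : ⟪v, z⟫ = c}`, then no interior point `x̄` of `S`
minimizes `D(x) = ∑ i ‖x - x i‖` over `S`: there is `z ∈ S` with `D(z) < D(x̄)`. -/
theorem interior_point_not_minimizer_of_separated
    (n N : ℕ) (hN : 0 < N)
    (S : Set (EuclideanSpace ℝ (Fin n)))
    (hSne : S.Nonempty) (hScl : IsClosed S) (hScv : Convex ℝ S)
    (x : Fin N → EuclideanSpace ℝ (Fin n)) (v : EuclideanSpace ℝ (Fin n)) (c : ℝ)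
    (hx : ∀ i, ⟪v, x i⟫ < c) (hS : ∀ s ∈ S, c < ⟪v, s⟫)
    (xbar : EuclideanSpace ℝ (Fin n)) (hxbar : xbar ∈ interior S) :
    ∃ z ∈ S, ∑ i, ‖z - x i‖ < ∑ i, ‖xbar - x i‖ := by
  have hxbarS : xbar ∈ S := interior_subset hxbar
  have hne : (Finset.univ : Finset (Fin N)).Nonempty := by
    simpa [Finset.univ_nonempty_iff] using Fin.pos_iff_nonempty.mp hN
  -- each inner product ⟪v, xbar - x i⟫ is positive
  have hpos : ∀ i, 0 < ⟪v, xbar - x i⟫ := by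
    intro i
    rw [inner_sub_right]
    have := (hx i).trans (hS xbar hxbarS)
    linarith
  set ε : ℝ := Finset.univ.inf' hne (fun i => ⟪v, xbar - x i⟫) with hε
  have hεpos : 0 < ε := by
    rw [hε, Finset.lt_inf'_iff]
    intro i _; exact hpos i
  have hεle : ∀ i, ε ≤ ⟪v, xbar - x i⟫ := fun i =>
    Finset.inf'_le _ (Finset.mem_univ i)
  have hv : v ≠ 0 := by
    intro h
    have := hpos ⟨0, hN⟩
    rw [h, inner_zero_left] at this
    exact lt_irrefl 0 this
  have hvn : 0 < ‖v‖ := norm_pos_iff.mpr hv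
  obtain ⟨r, hr, hball⟩ := Metric.mem_nhds_iff.mp (mem_interior_iff_mem_nhds.mp hxbar)
  set t : ℝ := min (ε / ‖v‖ ^ 2) (r / (2 * ‖v‖)) with ht
  have htpos : 0 < t := lt_min (div_pos hεpos (by positivity)) (div_pos hr (by positivity))
  have ht1 : t * ‖v‖ ^ 2 ≤ ε := by
    have := min_le_left (ε / ‖v‖ ^ 2) (r / (2 * ‖v‖))
    rw [← ht] at this
    calc t * ‖v‖ ^ 2 ≤ (ε / ‖v‖ ^ 2) * ‖v‖ ^ 2 := by nlinarith
    _ = ε := by field_simp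
  refine ⟨xbar - t • v, ?_, ?_⟩
  · apply hball
    have : ‖(xbar - t • v) - xbar‖ = t * ‖v‖ := by
      simp [norm_smul, abs_of_pos htpos]
    rw [Metric.mem_ball, dist_eq_norm, this]
    have := min_le_right (ε / ‖v‖ ^ 2) (r / (2 * ‖v‖))
    rw [← ht] at this
    calc t * ‖v‖ ≤ (r / (2 * ‖v‖)) * ‖v‖ := by nlinarith
    _ = r / 2 := by field_simp
    _ < r := by linarith
  · apply Finset.sum_lt_sum_of_nonempty hne
    intro i _
    have key : ‖(xbar - t • v) - x i‖ ^ 2 < ‖xbar - x i‖ ^ 2 := by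
      have h1 : (xbar - t • v) - x i = (xbar - x i) - t • v := by abel
      rw [h1, @norm_sub_sq_real]
      have h2 : ⟪xbar - x i, t • v⟫ = t * ⟪v, xbar - x i⟫ := by
        rw [real_inner_smul_right, real_inner_comm]
      have h3 : ‖t • v‖ ^ 2 = t ^ 2 * ‖v‖ ^ 2 := by
        rw [norm_smul, Real.norm_eq_abs, abs_of_pos htpos]; ring
      rw [h2, h3]
      have h4 : ε ≤ ⟪v, xbar - x i⟫ := hεle i
      nlinarith [htpos, hεpos]
    exact lt_of_pow_lt_pow_left₀ 2 (norm_nonneg _) key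
end

section
/- Suppose there exist v ∈ ℝ^n and c ∈ ℝ such that ⟨v, s⟩ > c for every s ∈ S_i (i = 1,…,k) and ⟨v, t⟩ < c for every t ∈ C_j (j = 1,…,m). If Z = (x_1,…,x_k,y_1,…,y_m) ∈ A is a feasible point such that some x_i lies in the interior of S_i (or some y_j lies in the interior of C_j), then there exists a feasible point Z̄ ∈ A with F(Z̄) < F(Z). Consequently, at any optimal solution every component lies on the boundary of its set. -/
open scoped RealInnerProductSpace

lemma key_norm_lt {n : ℕ} (v a : EuclideanSpace ℝ (Fin n)) (t : ℝ) (ht : 0 < t)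
    (h : t * ‖v‖ ^ 2 < 2 * ⟪v, a⟫) : ‖a - t • v‖ < ‖a‖ := by
  apply lt_of_pow_lt_pow_left₀ 2 (norm_nonneg a)
  have h1 : ‖a - t • v‖ ^ 2 = ‖a‖ ^ 2 - 2 * ⟪a, t • v⟫ + ‖t • v‖ ^ 2 := by
    rw [@norm_sub_sq_real]
  have h2 : ⟪a, t • v⟫ = t * ⟪v, a⟫ := by
    rw [real_inner_smul_right, real_inner_comm]
  have h3 : ‖t • v‖ ^ 2 = t ^ 2 * ‖v‖ ^ 2 := by
    rw [norm_smul]; rw [Real.norm_eq_abs]; rw [mul_pow, sq_abs]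
  nlinarith [norm_nonneg a]

lemma aux_move {n k m : ℕ} (hm : 0 < m)
    (S : Fin k → Set (EuclideanSpace ℝ (Fin n)))
    (x : Fin k → EuclideanSpace ℝ (Fin n)) (y : Fin m → EuclideanSpace ℝ (Fin n))
    (hx : ∀ i, x i ∈ S i)
    (v : EuclideanSpace ℝ (Fin n)) (c : ℝ) (i₀ : Fin k)
    (hint : x i₀ ∈ interior (S i₀))
    (hxv : c < ⟪v, x i₀⟫) (hyv : ∀ j, ⟪v, y j⟫ < c) :
    ∃ x' : Fin k → EuclideanSpace ℝ (Fin n), (∀ i, x' i ∈ S i) ∧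
      ∑ i, ∑ j, ‖x' i - y j‖ < ∑ i, ∑ j, ‖x i - y j‖ := by
  have hFm : (Finset.univ : Finset (Fin m)).Nonempty := by
    simpa [Finset.univ_nonempty_iff] using Fin.pos_iff_nonempty.mp hm
  have hd : ∀ j, 0 < ⟪v, x i₀ - y j⟫ := fun j => by
    rw [inner_sub_right]; linarith [hyv j]
  have hv : v ≠ 0 := by
    intro h
    have := hd ⟨0, hm⟩
    rw [h] at this
    simp [inner_zero_left] at this
  have hvn : 0 < ‖v‖ := norm_pos_iff.mpr hv
  obtain ⟨ε, hε, hεd⟩ : ∃ ε > 0, ∀ j, ε ≤ ⟪v, x i₀ - y j⟫ := by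
    obtain ⟨j₀, _, hj₀⟩ := Finset.exists_min_image Finset.univ (fun j => ⟪v, x i₀ - y j⟫) hFm
    exact ⟨_, hd j₀, fun j => hj₀ j (Finset.mem_univ j)⟩
  obtain ⟨δ, hδ, hball⟩ := Metric.isOpen_iff.mp isOpen_interior _ hint
  set t : ℝ := min (ε / ‖v‖ ^ 2) (δ / (2 * ‖v‖)) with ht_def
  have ht : 0 < t := lt_min (by positivity) (by positivity)
  have htv : t * ‖v‖ ^ 2 ≤ ε := by
    have := min_le_left (ε / ‖v‖ ^ 2) (δ / (2 * ‖v‖))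
    calc t * ‖v‖ ^ 2 ≤ (ε / ‖v‖ ^ 2) * ‖v‖ ^ 2 := by nlinarith
    _ = ε := by field_simp
  have hmem : x i₀ - t • v ∈ S i₀ := by
    apply interior_subset
    apply hball
    rw [Metric.mem_ball, dist_eq_norm]
    have : x i₀ - t • v - x i₀ = -(t • v) := by abel
    rw [this, norm_neg, norm_smul, Real.norm_eq_abs, abs_of_pos ht]
    calc t * ‖v‖ ≤ (δ / (2 * ‖v‖)) * ‖v‖ := by
          nlinarith [min_le_right (ε / ‖v‖ ^ 2) (δ / (2 * ‖v‖))]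
      _ = δ / 2 := by field_simp
      _ < δ := by linarith
  refine ⟨Function.update x i₀ (x i₀ - t • v), ?_, ?_⟩
  · intro i
    rcases eq_or_ne i i₀ with rfl | h
    · simpa using hmem
    · rw [Function.update_of_ne h]; exact hx i
  · apply Finset.sum_lt_sum
    · intro i _
      rcases eq_or_ne i i₀ with rfl | h
      · apply le_of_lt
        rw [Function.update_self]
        apply Finset.sum_lt_sum_of_nonempty hFm
        intro j _
        have : x i - t • v - y j = (x i - y j) - t • v := by abel
        rw [this]
        exact key_norm_lt v _ t ht (by nlinarith [hεd j])
      · rw [Function.update_of_ne h]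
    · refine ⟨i₀, Finset.mem_univ i₀, ?_⟩
      rw [Function.update_self]
      apply Finset.sum_lt_sum_of_nonempty hFm
      intro j _
      have : x i₀ - t • v - y j = (x i₀ - y j) - t • v := by abel
      rw [this]
      exact key_norm_lt v _ t ht (by nlinarith [hεd j])

/-- Suppose the feasible sets `S i` and the target sets `C j` are strictly separated by
the hyperplane `{z : ⟪v, z⟫ = c}`.  If a feasible point `Z = (x, y)` has some component
in the interior of its set, then there is a feasible point with strictly smaller
objective value `F`.  Consequently, at any optimal solution every component lies on the
boundary of its set. -/
theorem interior_component_not_optimal_km_Heron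
    (n k m : ℕ) (hn : 0 < n) (hk : 0 < k) (hm : 0 < m)
    (S : Fin k → Set (EuclideanSpace ℝ (Fin n)))
    (C : Fin m → Set (EuclideanSpace ℝ (Fin n)))
    (hSne : ∀ i, (S i).Nonempty) (hScl : ∀ i, IsClosed (S i)) (hScv : ∀ i, Convex ℝ (S i))
    (hCne : ∀ j, (C j).Nonempty) (hCcl : ∀ j, IsClosed (C j)) (hCcv : ∀ j, Convex ℝ (C j))
    (v : EuclideanSpace ℝ (Fin n)) (c : ℝ)
    (hSsep : ∀ i, ∀ s ∈ S i, c < ⟪v, s⟫) (hCsep : ∀ j, ∀ t ∈ C j, ⟪v, t⟫ < c) :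
    (∀ (x : Fin k → EuclideanSpace ℝ (Fin n)) (y : Fin m → EuclideanSpace ℝ (Fin n)),
      (∀ i, x i ∈ S i) → (∀ j, y j ∈ C j) →
      ((∃ i, x i ∈ interior (S i)) ∨ (∃ j, y j ∈ interior (C j))) →
      ∃ (x' : Fin k → EuclideanSpace ℝ (Fin n)) (y' : Fin m → EuclideanSpace ℝ (Fin n)),
        (∀ i, x' i ∈ S i) ∧ (∀ j, y' j ∈ C j) ∧
        ∑ i, ∑ j, ‖x' i - y' j‖ < ∑ i, ∑ j, ‖x i - y j‖) ∧
    (∀ (x : Fin k → EuclideanSpace ℝ (Fin n)) (y : Fin m → EuclideanSpace ℝ (Fin n)),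
      (∀ i, x i ∈ S i) → (∀ j, y j ∈ C j) →
      (∀ (x' : Fin k → EuclideanSpace ℝ (Fin n)) (y' : Fin m → EuclideanSpace ℝ (Fin n)),
        (∀ i, x' i ∈ S i) → (∀ j, y' j ∈ C j) →
        ∑ i, ∑ j, ‖x i - y j‖ ≤ ∑ i, ∑ j, ‖x' i - y' j‖) →
      (∀ i, x i ∈ frontier (S i)) ∧ (∀ j, y j ∈ frontier (C j))) := by
  have main : ∀ (x : Fin k → EuclideanSpace ℝ (Fin n)) (y : Fin m → EuclideanSpace ℝ (Fin n)),
      (∀ i, x i ∈ S i) → (∀ j, y j ∈ C j) →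
      ((∃ i, x i ∈ interior (S i)) ∨ (∃ j, y j ∈ interior (C j))) →
      ∃ (x' : Fin k → EuclideanSpace ℝ (Fin n)) (y' : Fin m → EuclideanSpace ℝ (Fin n)),
        (∀ i, x' i ∈ S i) ∧ (∀ j, y' j ∈ C j) ∧
        ∑ i, ∑ j, ‖x' i - y' j‖ < ∑ i, ∑ j, ‖x i - y j‖ := by
    intro x y hx hy hint
    rcases hint with ⟨i₀, hi₀⟩ | ⟨j₀, hj₀⟩
    · obtain ⟨x', hx', hlt⟩ := aux_move hm S x y hx v c i₀ hi₀
        (hSsep i₀ _ (hx i₀)) (fun j => hCsep j _ (hy j))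
      exact ⟨x', y, hx', hy, hlt⟩
    · obtain ⟨y', hy', hlt⟩ := aux_move hk C y x hy (-v) (-c) j₀ hj₀
        (by rw [inner_neg_left]; linarith [hCsep j₀ _ (hy j₀)])
        (fun i => by rw [inner_neg_left]; linarith [hSsep i _ (hx i)])
      refine ⟨x, y', hx, hy', ?_⟩
      calc ∑ i, ∑ j, ‖x i - y' j‖ = ∑ j, ∑ i, ‖y' j - x i‖ := by
            rw [Finset.sum_comm]; simp_rw [norm_sub_rev]
        _ < ∑ j, ∑ i, ‖y j - x i‖ := hlt
        _ = ∑ i, ∑ j, ‖x i - y j‖ := by rw [Finset.sum_comm]; simp_rw [norm_sub_rev]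
  refine ⟨main, ?_⟩
  intro x y hx hy hopt
  have hnotint : ¬ ((∃ i, x i ∈ interior (S i)) ∨ (∃ j, y j ∈ interior (C j))) := by
    intro h
    obtain ⟨x', y', hx', hy', hlt⟩ := main x y hx hy h
    exact absurd (hopt x' y' hx' hy') (not_le.mpr hlt)
  push_neg at hnotint
  obtain ⟨h1, h2⟩ := hnotint
  constructor
  · intro i
    rw [(hScl i).frontier_eq]
    exact ⟨hx i, h1 i⟩
  · intro j
    rw [(hCcl j).frontier_eq]
    exact ⟨hy j, h2 j⟩
end

section
/- Suppose each S_i and each C_j is strictly convex, and there exist v ∈ ℝ^n and c ∈ ℝ such that ⟨v, s⟩ > c for every s ∈ S_i (i = 1,…,k) and ⟨v, t⟩ < c for every t ∈ C_j (j = 1,…,m). Then the generalized (k,m)-Heron problem has at most one optimal solution: if Z and W are both minimizers of F over A, then Z = W. -/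
open scoped RealInnerProductSpace
open Filter

lemma key_scalar {E : Type*} [NormedAddCommGroup E] [InnerProductSpace ℝ E]
    (a u : E) (t : ℝ) (ht : 0 ≤ t) :
    2 * ‖a‖ * ‖a - t • u‖ ≤ 2 * ‖a‖ ^ 2 - 2 * t * ⟪a, u⟫ + t ^ 2 * ‖u‖ ^ 2 := by
  have h1 : ‖a - t • u‖ ^ 2 = ‖a‖ ^ 2 - 2 * (t * ⟪a, u⟫) + t ^ 2 * ‖u‖ ^ 2 := by
    rw [norm_sub_sq_real, real_inner_smul_right, norm_smul]
    rw [Real.norm_eq_abs, abs_of_nonneg ht, mul_pow]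
  have h2 : ⟪a, u⟫ ≤ ‖a‖ * ‖u‖ := real_inner_le_norm a u
  have h3 : -(‖a‖ * ‖u‖) ≤ ⟪a, u⟫ := neg_le_of_neg_le (by simpa using real_inner_le_norm a (-u))
  have hQ : 0 ≤ 2 * ‖a‖ ^ 2 - 2 * t * ⟪a, u⟫ + t ^ 2 * ‖u‖ ^ 2 := by
    nlinarith [sq_nonneg (‖a‖ - t * ‖u‖), mul_nonneg ht (mul_nonneg (norm_nonneg a) (norm_nonneg u))]
  have hz2 : (2 * ‖a‖ * ‖a - t • u‖) ^ 2 ≤ (2 * ‖a‖ ^ 2 - 2 * t * ⟪a, u⟫ + t ^ 2 * ‖u‖ ^ 2) ^ 2 := by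
    have : (2 * ‖a‖ * ‖a - t • u‖) ^ 2 = 4 * ‖a‖ ^ 2 * ‖a - t • u‖ ^ 2 := by ring
    rw [this, h1]
    nlinarith [sq_nonneg (2 * t * ⟪a, u⟫ - t ^ 2 * ‖u‖ ^ 2)]
  nlinarith [mul_nonneg (mul_nonneg (by norm_num : (0:ℝ) ≤ 2) (norm_nonneg a)) (norm_nonneg (a - t • u))]

lemma exists_pert {E : Type*} [NormedAddCommGroup E] [InnerProductSpace ℝ E]
    {ι : Type*} [Fintype ι] [Nonempty ι] (a : ι → E) (v : E)
    (hv : ∀ j, 0 < ⟪v, a j⟫) :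
    ∃ u : E, ∀ᶠ t in nhdsWithin (0:ℝ) (Set.Ioi 0),
      ∑ j, ‖a j - t • u‖ < ∑ j, ‖a j‖ := by
  have ha : ∀ j, a j ≠ 0 := by
    intro j h
    have := hv j
    rw [h, inner_zero_right] at this
    exact lt_irrefl 0 this
  have hnorm : ∀ j, (0:ℝ) < ‖a j‖ := fun j => norm_pos_iff.mpr (ha j)
  set u : E := ∑ j, ‖a j‖⁻¹ • a j with hu_def
  have hvu : 0 < ⟪v, u⟫ := by
    rw [hu_def, inner_sum]
    apply Finset.sum_pos
    · intro j _
      rw [real_inner_smul_right]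
      exact mul_pos (inv_pos.mpr (hnorm j)) (hv j)
    · exact Finset.univ_nonempty
  have hu : u ≠ 0 := by
    intro h; rw [h, inner_zero_right] at hvu; exact lt_irrefl 0 hvu
  have hun : (0:ℝ) < ‖u‖ ^ 2 := pow_pos (norm_pos_iff.mpr hu) 2
  set K : ℝ := ∑ j, (2 * ‖a j‖)⁻¹ with hK_def
  have hK : 0 < K := Finset.sum_pos (fun j _ => inv_pos.mpr (by linarith [hnorm j])) Finset.univ_nonempty
  have hsum : ∑ j, ⟪a j, u⟫ / ‖a j‖ = ‖u‖ ^ 2 := by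
    have : ⟪u, u⟫ = ∑ j, ⟪(‖a j‖⁻¹ • a j : E), u⟫ := by rw [hu_def, sum_inner]
    rw [← real_inner_self_eq_norm_sq, this]
    apply Finset.sum_congr rfl
    intro j _
    rw [real_inner_smul_left, div_eq_inv_mul]
  refine ⟨u, ?_⟩
  have hmem : Set.Ioo (0:ℝ) ((K + 1)⁻¹) ∈ nhdsWithin (0:ℝ) (Set.Ioi 0) :=
    Ioo_mem_nhdsGT_of_mem ⟨le_refl 0, by positivity⟩
  filter_upwards [hmem] with t ht
  obtain ⟨ht0, htK⟩ := ht
  have hper : ∀ j, ‖a j - t • u‖ ≤ ‖a j‖ - t * (⟪a j, u⟫ / ‖a j‖) + t ^ 2 * ‖u‖ ^ 2 * (2 * ‖a j‖)⁻¹ := by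
    intro j
    have hks := key_scalar (a j) u t ht0.le
    have h2s : (0:ℝ) < 2 * ‖a j‖ := by linarith [hnorm j]
    have hne : ‖a j‖ ≠ 0 := (hnorm j).ne'
    rw [show ‖a j‖ - t * (⟪a j, u⟫ / ‖a j‖) + t ^ 2 * ‖u‖ ^ 2 * (2 * ‖a j‖)⁻¹
        = (2 * ‖a j‖ ^ 2 - 2 * t * ⟪a j, u⟫ + t ^ 2 * ‖u‖ ^ 2) / (2 * ‖a j‖) by
      field_simp]
    rw [le_div_iff₀ h2s]
    linarith [hks]
  calc ∑ j, ‖a j - t • u‖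
      ≤ ∑ j, (‖a j‖ - t * (⟪a j, u⟫ / ‖a j‖) + t ^ 2 * ‖u‖ ^ 2 * (2 * ‖a j‖)⁻¹) :=
        Finset.sum_le_sum fun j _ => hper j
    _ = ∑ j, ‖a j‖ - t * ‖u‖ ^ 2 + t ^ 2 * ‖u‖ ^ 2 * K := by
        rw [Finset.sum_add_distrib, Finset.sum_sub_distrib, ← Finset.mul_sum, hsum,
          hK_def, ← Finset.mul_sum]
    _ < ∑ j, ‖a j‖ := by
        have htK' : t * K < 1 := by
          have : t * (K + 1) < 1 := by
            calc t * (K + 1) < (K+1)⁻¹ * (K+1) := by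
                  apply mul_lt_mul_of_pos_right htK (by positivity)
              _ = 1 := by field_simp
          nlinarith
        nlinarith [mul_pos ht0 hun]


/-- **Uniqueness of the optimal solution.**  If all the sets `S i` and `C j` are strictly
convex and the two families are strictly separated by a hyperplane `{z : ⟪v, z⟫ = c}`,
then the generalized (k,m)-Heron problem has at most one optimal solution. -/
theorem generalized_km_Heron_uniqueness
    (n k m : ℕ) (hn : 0 < n) (hk : 0 < k) (hm : 0 < m)
    (S : Fin k → Set (EuclideanSpace ℝ (Fin n)))
    (C : Fin m → Set (EuclideanSpace ℝ (Fin n)))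
    (hSne : ∀ i, (S i).Nonempty) (hScl : ∀ i, IsClosed (S i)) (hScv : ∀ i, Convex ℝ (S i))
    (hCne : ∀ j, (C j).Nonempty) (hCcl : ∀ j, IsClosed (C j)) (hCcv : ∀ j, Convex ℝ (C j))
    (hSstrict : ∀ i, StrictConvex ℝ (S i)) (hCstrict : ∀ j, StrictConvex ℝ (C j))
    (v : EuclideanSpace ℝ (Fin n)) (c : ℝ)
    (hSsep : ∀ i, ∀ s ∈ S i, c < ⟪v, s⟫) (hCsep : ∀ j, ∀ t ∈ C j, ⟪v, t⟫ < c)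
    (x p : Fin k → EuclideanSpace ℝ (Fin n)) (y q : Fin m → EuclideanSpace ℝ (Fin n))
    (hx : ∀ i, x i ∈ S i) (hy : ∀ j, y j ∈ C j)
    (hp : ∀ i, p i ∈ S i) (hq : ∀ j, q j ∈ C j)
    (hZopt : ∀ (x' : Fin k → EuclideanSpace ℝ (Fin n)) (y' : Fin m → EuclideanSpace ℝ (Fin n)),
      (∀ i, x' i ∈ S i) → (∀ j, y' j ∈ C j) →
      ∑ i, ∑ j, ‖x i - y j‖ ≤ ∑ i, ∑ j, ‖x' i - y' j‖)
    (hWopt : ∀ (x' : Fin k → EuclideanSpace ℝ (Fin n)) (y' : Fin m → EuclideanSpace ℝ (Fin n)),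
      (∀ i, x' i ∈ S i) → (∀ j, y' j ∈ C j) →
      ∑ i, ∑ j, ‖p i - q j‖ ≤ ∑ i, ∑ j, ‖x' i - y' j‖) :
    x = p ∧ y = q := by
  have hK : Nonempty (Fin k) := ⟨⟨0, hk⟩⟩
  have hM : Nonempty (Fin m) := ⟨⟨0, hm⟩⟩
  set mx : Fin k → EuclideanSpace ℝ (Fin n) :=
    fun i => (2⁻¹:ℝ) • x i + (2⁻¹:ℝ) • p i with hmx_def
  set my : Fin m → EuclideanSpace ℝ (Fin n) :=
    fun j => (2⁻¹:ℝ) • y j + (2⁻¹:ℝ) • q j with hmy_def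
  have hmxS : ∀ i, mx i ∈ S i := fun i =>
    hScv i (hx i) (hp i) (by norm_num) (by norm_num) (by norm_num)
  have hmyC : ∀ j, my j ∈ C j := fun j =>
    hCcv j (hy j) (hq j) (by norm_num) (by norm_num) (by norm_num)
  have hFW : ∑ i, ∑ j, ‖p i - q j‖ = ∑ i, ∑ j, ‖x i - y j‖ :=
    le_antisymm (hWopt x y hx hy) (hZopt p q hp hq)
  have hterm : ∀ i j, ‖mx i - my j‖ ≤ (‖x i - y j‖ + ‖p i - q j‖) / 2 := by
    intro i j
    have heq : mx i - my j = (2⁻¹:ℝ) • ((x i - y j) + (p i - q j)) := by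
      simp only [hmx_def, hmy_def, smul_add, smul_sub]
      abel
    rw [heq, norm_smul, Real.norm_eq_abs]
    have := norm_add_le (x i - y j) (p i - q j)
    rw [show |(2:ℝ)⁻¹| = 2⁻¹ by norm_num]
    linarith
  have hFM : ∑ i, ∑ j, ‖mx i - my j‖ ≤ ∑ i, ∑ j, ‖x i - y j‖ := by
    calc ∑ i, ∑ j, ‖mx i - my j‖
        ≤ ∑ i, ∑ j, (‖x i - y j‖ + ‖p i - q j‖) / 2 :=
          Finset.sum_le_sum fun i _ => Finset.sum_le_sum fun j _ => hterm i j
      _ = (∑ i, ∑ j, ‖x i - y j‖ + ∑ i, ∑ j, ‖p i - q j‖) / 2 := by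
          simp only [add_div, Finset.sum_add_distrib, ← Finset.sum_div]
      _ = ∑ i, ∑ j, ‖x i - y j‖ := by rw [hFW]; ring
  have hmxv : ∀ i, c < ⟪v, mx i⟫ := fun i => hSsep i _ (hmxS i)
  have hmyv : ∀ j, ⟪v, my j⟫ < c := fun j => hCsep j _ (hmyC j)
  constructor
  · funext i0
    by_contra hne
    have hint : mx i0 ∈ interior (S i0) := by
      apply (hSstrict i0).openSegment_subset (hx i0) (hp i0) hne
      exact ⟨2⁻¹, 2⁻¹, by norm_num, by norm_num, by norm_num, rfl⟩
    set a : Fin m → EuclideanSpace ℝ (Fin n) := fun j => mx i0 - my j with ha_def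
    have hva : ∀ j, 0 < ⟪v, a j⟫ := by
      intro j
      have : a j = mx i0 - my j := rfl
      rw [this, inner_sub_right]
      linarith [hmxv i0, hmyv j]
    obtain ⟨u, hev⟩ := exists_pert a v hva
    have hcont : ContinuousAt (fun t : ℝ => mx i0 - t • u) 0 := by fun_prop
    have hev2 : ∀ᶠ t in nhdsWithin (0:ℝ) (Set.Ioi 0), mx i0 - t • u ∈ interior (S i0) := by
      apply Filter.Eventually.filter_mono nhdsWithin_le_nhds
      apply hcont.eventually_mem
      apply isOpen_interior.mem_nhds
      simp only [zero_smul, sub_zero]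
      exact hint
    obtain ⟨t, hlt, hmem⟩ := (hev.and hev2).exists
    set x' : Fin k → EuclideanSpace ℝ (Fin n) :=
      Function.update mx i0 (mx i0 - t • u) with hx'_def
    have hx'S : ∀ i, x' i ∈ S i := by
      intro i
      by_cases h : i = i0
      · subst h; rw [hx'_def, Function.update_self]; exact interior_subset hmem
      · rw [hx'_def, Function.update_of_ne h]; exact hmxS i
    have hre : ∑ j, ‖(mx i0 - t • u) - my j‖ = ∑ j, ‖a j - t • u‖ := by
      apply Finset.sum_congr rfl
      intro j _
      congr 1
      show (mx i0 - t • u) - my j = (mx i0 - my j) - t • u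
      abel
    have hlt2 : ∑ i, ∑ j, ‖x' i - my j‖ < ∑ i, ∑ j, ‖mx i - my j‖ := by
      apply Finset.sum_lt_sum
      · intro i _
        by_cases h : i = i0
        · subst h
          rw [hx'_def, Function.update_self, hre]
          exact le_of_lt hlt
        · rw [hx'_def, Function.update_of_ne h]
      · refine ⟨i0, Finset.mem_univ _, ?_⟩
        rw [hx'_def, Function.update_self, hre]
        exact hlt
    have hopt := hZopt x' my hx'S hmyC
    linarith
  · funext j0
    by_contra hne
    have hint : my j0 ∈ interior (C j0) := by
      apply (hCstrict j0).openSegment_subset (hy j0) (hq j0) hne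
      exact ⟨2⁻¹, 2⁻¹, by norm_num, by norm_num, by norm_num, rfl⟩
    set a : Fin k → EuclideanSpace ℝ (Fin n) := fun i => mx i - my j0 with ha_def
    have hva : ∀ i, 0 < ⟪v, a i⟫ := by
      intro i
      have : a i = mx i - my j0 := rfl
      rw [this, inner_sub_right]
      linarith [hmxv i, hmyv j0]
    obtain ⟨u, hev⟩ := exists_pert a v hva
    have hcont : ContinuousAt (fun t : ℝ => my j0 + t • u) 0 := by fun_prop
    have hev2 : ∀ᶠ t in nhdsWithin (0:ℝ) (Set.Ioi 0), my j0 + t • u ∈ interior (C j0) := by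
      apply Filter.Eventually.filter_mono nhdsWithin_le_nhds
      apply hcont.eventually_mem
      apply isOpen_interior.mem_nhds
      simp only [zero_smul, add_zero]
      exact hint
    obtain ⟨t, hlt, hmem⟩ := (hev.and hev2).exists
    set y' : Fin m → EuclideanSpace ℝ (Fin n) :=
      Function.update my j0 (my j0 + t • u) with hy'_def
    have hy'C : ∀ j, y' j ∈ C j := by
      intro j
      by_cases h : j = j0
      · subst h; rw [hy'_def, Function.update_self]; exact interior_subset hmem
      · rw [hy'_def, Function.update_of_ne h]; exact hmyC j
    have hre : ∑ i, ‖mx i - (my j0 + t • u)‖ = ∑ i, ‖a i - t • u‖ := by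
      apply Finset.sum_congr rfl
      intro i _
      congr 1
      show mx i - (my j0 + t • u) = (mx i - my j0) - t • u
      abel
    have hlt2 : ∑ i, ∑ j, ‖mx i - y' j‖ < ∑ i, ∑ j, ‖mx i - my j‖ := by
      have hs1 : ∑ i, ∑ j, ‖mx i - y' j‖ = ∑ j, ∑ i, ‖mx i - y' j‖ := Finset.sum_comm
      have hs2 : ∑ i, ∑ j, ‖mx i - my j‖ = ∑ j, ∑ i, ‖mx i - my j‖ := Finset.sum_comm
      rw [hs1, hs2]
      apply Finset.sum_lt_sum
      · intro j _
        by_cases h : j = j0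
        · subst h
          rw [hy'_def, Function.update_self, hre]
          exact le_of_lt hlt
        · rw [hy'_def, Function.update_of_ne h]
      · refine ⟨j0, Finset.mem_univ _, ?_⟩
        rw [hy'_def, Function.update_self, hre]
        exact hlt
    have hopt := hZopt mx y' hmxS hy'C
    linarith
end

section
/- Assume S_i ∩ C_j = ∅ for all i, j, and let Z* = (x_1*, …, x_k*, y_1*, …, y_m*) ∈ A be feasible (so x_i* ≠ y_j* for all i, j). Then Z* is an optimal solution of the generalized (k,m)-Heron problem if and only if for each i = 1,…,k the vector −Σ_{j=1}^m (x_i* − y_j*)/‖x_i* − y_j*‖ belongs to the normal cone N_{S_i}(x_i*), and for each j = 1,…,m the vector −Σ_{i=1}^k (y_j* − x_i*)/‖y_j* − x_i*‖ belongs to the normal cone N_{C_j}(y_j*). -/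
open scoped RealInnerProductSpace Topology

/-- The normal cone to a set `s` at a point `x`:
`N_s(x) = {v : ⟪v, z - x⟫ ≤ 0 for all z ∈ s}`. -/
def normalCone {E : Type*} [NormedAddCommGroup E] [InnerProductSpace ℝ E]
    (s : Set E) (x : E) : Set E :=
  {v : E | ∀ z ∈ s, ⟪v, z - x⟫ ≤ 0}


private lemma norm_subgrad {E : Type*} [NormedAddCommGroup E] [InnerProductSpace ℝ E]
    {a : E} (ha : a ≠ 0) (b : E) :
    ‖a‖ + ⟪(‖a‖⁻¹ • a), b - a⟫ ≤ ‖b‖ := by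
  have hna : (0:ℝ) < ‖a‖ := norm_pos_iff.mpr ha
  rw [real_inner_smul_left, inner_sub_right, real_inner_self_eq_norm_sq]
  have h1 : ⟪a, b⟫ ≤ ‖a‖ * ‖b‖ := real_inner_le_norm a b
  have key : ‖a‖⁻¹ * (⟪a, b⟫ - ‖a‖ ^ 2) ≤ ‖b‖ - ‖a‖ := by
    rw [inv_mul_le_iff₀ hna]
    nlinarith
  linarith

private lemma hasDerivAt_norm_line {E : Type*} [NormedAddCommGroup E] [InnerProductSpace ℝ E]
    {a : E} (ha : a ≠ 0) (h : E) :
    HasDerivAt (fun t : ℝ => ‖a + t • h‖) ⟪(‖a‖⁻¹ • a), h⟫ 0 := by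
  have hna : (0:ℝ) < ‖a‖ := norm_pos_iff.mpr ha
  have hfun : (fun t : ℝ => ‖a + t • h‖)
      = fun t : ℝ => Real.sqrt (‖a‖ ^ 2 + 2 * ⟪a, h⟫ * t + ⟪h, h⟫ * (t * t)) := by
    funext t
    rw [← Real.sqrt_sq (norm_nonneg (a + t • h)), ← real_inner_self_eq_norm_sq]
    congr 1
    rw [real_inner_add_add_self, real_inner_smul_right, real_inner_smul_left,
      real_inner_smul_right, real_inner_self_eq_norm_sq]
    ring
  have hp : HasDerivAt (fun t : ℝ => ‖a‖ ^ 2 + 2 * ⟪a, h⟫ * t + ⟪h, h⟫ * (t * t))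
      (2 * ⟪a, h⟫) 0 := by
    have h1 : HasDerivAt (fun t : ℝ => 2 * ⟪a, h⟫ * t) (2 * ⟪a, h⟫) 0 := by
      simpa using (hasDerivAt_id (0:ℝ)).const_mul (2 * ⟪a, h⟫)
    have h2 : HasDerivAt (fun t : ℝ => ⟪h, h⟫ * (t * t)) 0 0 := by
      have := ((hasDerivAt_id (0:ℝ)).mul (hasDerivAt_id 0)).const_mul ⟪h, h⟫
      simpa using this
    simpa using ((hasDerivAt_const (0:ℝ) (‖a‖ ^ 2)).fun_add h1).fun_add h2
  have hval : ‖a‖ ^ 2 + 2 * ⟪a, h⟫ * 0 + ⟪h, h⟫ * (0 * 0) = ‖a‖ ^ 2 := by ring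
  have hsq : Real.sqrt (‖a‖ ^ 2) = ‖a‖ := Real.sqrt_sq (norm_nonneg a)
  have hs : HasDerivAt Real.sqrt
      (1 / (2 * Real.sqrt (‖a‖ ^ 2 + 2 * ⟪a, h⟫ * 0 + ⟪h, h⟫ * (0 * 0))))
      (‖a‖ ^ 2 + 2 * ⟪a, h⟫ * 0 + ⟪h, h⟫ * (0 * 0)) :=
    Real.hasDerivAt_sqrt (by rw [hval]; positivity)
  have hcomp := hs.comp 0 hp
  rw [hfun]
  refine hcomp.congr_deriv ?_
  rw [real_inner_smul_left, hval, hsq]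
  field_simp

private lemma deriv_nonneg_of_min {g : ℝ → ℝ} {d : ℝ} (hg : HasDerivAt g d 0)
    (hmin : ∀ t ∈ Set.Ioc (0:ℝ) 1, g 0 ≤ g t) : 0 ≤ d := by
  have h1 : Filter.Tendsto (slope g 0) (𝓝[≠] 0) (𝓝 d) := hasDerivAt_iff_tendsto_slope.mp hg
  have h2 : Filter.Tendsto (slope g 0) (𝓝[>] 0) (𝓝 d) :=
    h1.mono_left (nhdsWithin_mono 0 fun t ht => ht.ne')
  refine ge_of_tendsto h2 ?_
  filter_upwards [Ioc_mem_nhdsGT_of_mem (by norm_num : (0:ℝ) ∈ Set.Ico 0 1)] with t ht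
  rw [slope_def_field]
  have := hmin t ht
  apply div_nonneg (by linarith) (by simp [ht.1.le])

private lemma row_le {ι : Type*} [Fintype ι] [DecidableEq ι] (f g : ι → ℝ) (i₀ : ι)
    (hfg : ∀ i, i ≠ i₀ → f i = g i) (h : ∑ i, f i ≤ ∑ i, g i) : f i₀ ≤ g i₀ := by
  rw [← Finset.add_sum_erase _ f (Finset.mem_univ i₀),
      ← Finset.add_sum_erase _ g (Finset.mem_univ i₀)] at h
  have he : ∑ i ∈ Finset.univ.erase i₀, f i = ∑ i ∈ Finset.univ.erase i₀, g i :=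
    Finset.sum_congr rfl fun i hi => hfg i (Finset.ne_of_mem_erase hi)
  linarith

/-- **First-order optimality conditions for the generalized (k,m)-Heron problem.**
Assume `S i ∩ C j = ∅` for all `i, j`, and let `Z* = (x, y)` be feasible.  Then `Z*` is
optimal iff for each `i` the vector `-∑ j (x i - y j)/‖x i - y j‖` lies in the normal
cone `N_{S i}(x i)`, and for each `j` the vector `-∑ i (y j - x i)/‖y j - x i‖` lies in
the normal cone `N_{C j}(y j)`. -/
theorem generalized_km_Heron_optimality_conditions
    (n k m : ℕ) (hn : 0 < n) (hk : 0 < k) (hm : 0 < m)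
    (S : Fin k → Set (EuclideanSpace ℝ (Fin n)))
    (C : Fin m → Set (EuclideanSpace ℝ (Fin n)))
    (hSne : ∀ i, (S i).Nonempty) (hScl : ∀ i, IsClosed (S i)) (hScv : ∀ i, Convex ℝ (S i))
    (hCne : ∀ j, (C j).Nonempty) (hCcl : ∀ j, IsClosed (C j)) (hCcv : ∀ j, Convex ℝ (C j))
    (hdisj : ∀ i j, S i ∩ C j = ∅)
    (x : Fin k → EuclideanSpace ℝ (Fin n)) (y : Fin m → EuclideanSpace ℝ (Fin n))
    (hx : ∀ i, x i ∈ S i) (hy : ∀ j, y j ∈ C j) :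
    (∀ (x' : Fin k → EuclideanSpace ℝ (Fin n)) (y' : Fin m → EuclideanSpace ℝ (Fin n)),
      (∀ i, x' i ∈ S i) → (∀ j, y' j ∈ C j) →
      ∑ i, ∑ j, ‖x i - y j‖ ≤ ∑ i, ∑ j, ‖x' i - y' j‖) ↔
    ((∀ i, -(∑ j, (‖x i - y j‖)⁻¹ • (x i - y j)) ∈ normalCone (S i) (x i)) ∧
     (∀ j, -(∑ i, (‖y j - x i‖)⁻¹ • (y j - x i)) ∈ normalCone (C j) (y j))) := by
  have hne : ∀ i j, x i - y j ≠ 0 := by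
    intro i j hij
    have hxy : x i = y j := sub_eq_zero.mp hij
    have : x i ∈ S i ∩ C j := ⟨hx i, hxy ▸ hy j⟩
    simp [hdisj i j] at this
  have hne' : ∀ i j, y j - x i ≠ 0 := fun i j h => hne i j (by
    rw [← neg_sub] at h; exact neg_eq_zero.mp h)
  constructor
  · -- optimality → normal cone conditions
    intro opt
    constructor
    · -- x side
      intro i₀ z hz
      set h : EuclideanSpace ℝ (Fin n) := z - x i₀ with hh
      have hg : HasDerivAt (fun t : ℝ => ∑ j, ‖(x i₀ - y j) + t • h‖)
          (∑ j, ⟪‖x i₀ - y j‖⁻¹ • (x i₀ - y j), h⟫) 0 :=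
        HasDerivAt.fun_sum fun j _ => hasDerivAt_norm_line (hne i₀ j) h
      have hmin : ∀ t ∈ Set.Ioc (0:ℝ) 1,
          (∑ j, ‖(x i₀ - y j) + (0:ℝ) • h‖) ≤ ∑ j, ‖(x i₀ - y j) + t • h‖ := by
        intro t ht
        set x' : Fin k → EuclideanSpace ℝ (Fin n) :=
          Function.update x i₀ (x i₀ + t • h) with hx'def
        have hx' : ∀ i, x' i ∈ S i := by
          intro i
          by_cases hi : i = i₀
          · subst hi
            have hmem := hScv i (hx i) hz (by linarith [ht.2] : (0:ℝ) ≤ 1 - t) ht.1.le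
              (by ring)
            have : x i + t • h = (1 - t) • x i + t • z := by
              rw [hh]; module
            rw [hx'def, Function.update_self, this]
            exact hmem
          · rw [hx'def, Function.update_of_ne hi]; exact hx i
        have htot := opt x' y hx' hy
        have hrow : ∑ j, ‖x i₀ - y j‖ ≤ ∑ j, ‖x' i₀ - y j‖ := by
          refine row_le (fun i => ∑ j, ‖x i - y j‖) (fun i => ∑ j, ‖x' i - y j‖) i₀
            (fun i hi => ?_) htot
          rw [hx'def]; simp [Function.update_of_ne hi]
        calc ∑ j, ‖(x i₀ - y j) + (0:ℝ) • h‖ = ∑ j, ‖x i₀ - y j‖ := by simp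
          _ ≤ ∑ j, ‖x' i₀ - y j‖ := hrow
          _ = ∑ j, ‖(x i₀ - y j) + t • h‖ := by
              refine Finset.sum_congr rfl fun j _ => ?_
              rw [hx'def, Function.update_self]
              congr 1
              abel
      have hd := deriv_nonneg_of_min hg hmin
      show ⟪-(∑ j, ‖x i₀ - y j‖⁻¹ • (x i₀ - y j)), z - x i₀⟫ ≤ 0
      rw [inner_neg_left, sum_inner]
      rw [hh] at hd
      linarith
    · -- y side
      intro j₀ z hz
      set h : EuclideanSpace ℝ (Fin n) := z - y j₀ with hh
      have hg : HasDerivAt (fun t : ℝ => ∑ i, ‖(y j₀ - x i) + t • h‖)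
          (∑ i, ⟪‖y j₀ - x i‖⁻¹ • (y j₀ - x i), h⟫) 0 :=
        HasDerivAt.fun_sum fun i _ => hasDerivAt_norm_line (hne' i j₀) h
      have hmin : ∀ t ∈ Set.Ioc (0:ℝ) 1,
          (∑ i, ‖(y j₀ - x i) + (0:ℝ) • h‖) ≤ ∑ i, ‖(y j₀ - x i) + t • h‖ := by
        intro t ht
        set y' : Fin m → EuclideanSpace ℝ (Fin n) :=
          Function.update y j₀ (y j₀ + t • h) with hy'def
        have hy' : ∀ j, y' j ∈ C j := by
          intro j
          by_cases hj : j = j₀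
          · subst hj
            have hmem := hCcv j (hy j) hz (by linarith [ht.2] : (0:ℝ) ≤ 1 - t) ht.1.le
              (by ring)
            have : y j + t • h = (1 - t) • y j + t • z := by
              rw [hh]; module
            rw [hy'def, Function.update_self, this]
            exact hmem
          · rw [hy'def, Function.update_of_ne hj]; exact hy j
        have htot := opt x y' hx hy'
        rw [Finset.sum_comm (f := fun i j => ‖x i - y j‖),
            Finset.sum_comm (f := fun i j => ‖x i - y' j‖)] at htot
        have hrow : ∑ i, ‖x i - y j₀‖ ≤ ∑ i, ‖x i - y' j₀‖ := by
          refine row_le (fun j => ∑ i, ‖x i - y j‖) (fun j => ∑ i, ‖x i - y' j‖) j₀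
            (fun j hj => ?_) htot
          rw [hy'def]; simp [Function.update_of_ne hj]
        calc ∑ i, ‖(y j₀ - x i) + (0:ℝ) • h‖ = ∑ i, ‖x i - y j₀‖ := by
              simp [norm_sub_rev]
          _ ≤ ∑ i, ‖x i - y' j₀‖ := hrow
          _ = ∑ i, ‖(y j₀ - x i) + t • h‖ := by
              refine Finset.sum_congr rfl fun i _ => ?_
              rw [hy'def, Function.update_self, ← norm_neg]
              congr 1
              abel
      have hd := deriv_nonneg_of_min hg hmin
      show ⟪-(∑ i, ‖y j₀ - x i‖⁻¹ • (y j₀ - x i)), z - y j₀⟫ ≤ 0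
      rw [inner_neg_left, sum_inner]
      rw [hh] at hd
      linarith
  · -- normal cone conditions → optimality
    rintro ⟨hxc, hyc⟩ x' y' hx' hy'
    set u : Fin k → Fin m → EuclideanSpace ℝ (Fin n) :=
      fun i j => ‖x i - y j‖⁻¹ • (x i - y j) with hu
    have key : ∀ i j, ‖x i - y j‖ + ⟪u i j, x' i - x i⟫ - ⟪u i j, y' j - y j⟫
        ≤ ‖x' i - y' j‖ := by
      intro i j
      have hsg := norm_subgrad (hne i j) (x' i - y' j)
      have hdec : (x' i - y' j) - (x i - y j) = (x' i - x i) - (y' j - y j) :=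
        sub_sub_sub_comm _ _ _ _
      rw [hdec, inner_sub_right] at hsg
      linarith [hsg]
    have hsum : ∑ i, ∑ j, (‖x i - y j‖ + ⟪u i j, x' i - x i⟫ - ⟪u i j, y' j - y j⟫)
        ≤ ∑ i, ∑ j, ‖x' i - y' j‖ :=
      Finset.sum_le_sum fun i _ => Finset.sum_le_sum fun j _ => key i j
    have hsplit : ∑ i, ∑ j, (‖x i - y j‖ + ⟪u i j, x' i - x i⟫ - ⟪u i j, y' j - y j⟫)
        = (∑ i, ∑ j, ‖x i - y j‖) + (∑ i, ∑ j, ⟪u i j, x' i - x i⟫)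
          - ∑ i, ∑ j, ⟪u i j, y' j - y j⟫ := by
      simp [Finset.sum_sub_distrib, Finset.sum_add_distrib]
    have hterm1 : (0:ℝ) ≤ ∑ i, ∑ j, ⟪u i j, x' i - x i⟫ := by
      refine Finset.sum_nonneg fun i _ => ?_
      have := hxc i (x' i) (hx' i)
      rw [inner_neg_left, sum_inner] at this
      linarith
    have hterm2 : ∑ i, ∑ j, ⟪u i j, y' j - y j⟫ ≤ 0 := by
      rw [Finset.sum_comm]
      refine Finset.sum_nonpos fun j _ => ?_
      have hc := hyc j (y' j) (hy' j)
      rw [inner_neg_left, sum_inner] at hc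
      have heq : ∀ i, ⟪u i j, y' j - y j⟫ = -⟪‖y j - x i‖⁻¹ • (y j - x i), y' j - y j⟫ := by
        intro i
        have h2 : u i j = -(‖y j - x i‖⁻¹ • (y j - x i)) := by
          show ‖x i - y j‖⁻¹ • (x i - y j) = _
          rw [norm_sub_rev, ← smul_neg, neg_sub]
        rw [h2, inner_neg_left]
      rw [Finset.sum_congr rfl fun i _ => heq i]
      simpa using hc
    rw [hsplit] at hsum
    linarith
end

section
/- Assume S_i ∩ C_j = ∅ for all i, j, and let Z* = (x_1*, …, x_k*, y_1*, …, y_m*) ∈ A be an optimal solution of the generalized (k,m)-Heron problem. Define n_{S_i} = Σ_{j=1}^m (y_j* − x_i*)/‖x_i* − y_j*‖ for i = 1,…,k and n_{C_j} = Σ_{i=1}^k (x_i* − y_j*)/‖x_i* − y_j*‖ for j = 1,…,m. Then n_{S_i} ∈ N_{S_i}(x_i*) for every i, n_{C_j} ∈ N_{C_j}(y_j*) for every j, and the global equilibrium condition Σ_{i=1}^k n_{S_i} + Σ_{j=1}^m n_{C_j} = 0 holds. -/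
open scoped RealInnerProductSpace

lemma heron_aux_norm {E : Type*} [NormedAddCommGroup E] [InnerProductSpace ℝ E]
    (a v : E) (ha : a ≠ 0) :
    ‖a + v‖ ≤ ‖a‖ + ‖a‖⁻¹ * ⟪a, v⟫ + (2 * ‖a‖)⁻¹ * ‖v‖ ^ 2 := by
  have hc : (0:ℝ) < ‖a‖ := norm_pos_iff.2 ha
  have key : ‖a + v‖ ^ 2 = ‖a‖ ^ 2 + 2 * ⟪a, v⟫ + ‖v‖ ^ 2 := by
    rw [@norm_add_sq_real]
  have h2 : ‖a + v‖ * (2 * ‖a‖) ≤ 2 * ‖a‖ ^ 2 + 2 * ⟪a, v⟫ + ‖v‖ ^ 2 := by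
    nlinarith [sq_nonneg (‖a‖ - ‖a + v‖), norm_nonneg (a + v)]
  rw [show ‖a‖ + ‖a‖⁻¹ * ⟪a, v⟫ + (2 * ‖a‖)⁻¹ * ‖v‖ ^ 2
      = (2 * ‖a‖ ^ 2 + 2 * ⟪a, v⟫ + ‖v‖ ^ 2) / (2 * ‖a‖) by field_simp]
  rw [le_div_iff₀ (by positivity)]
  exact h2

lemma heron_key {E : Type*} [NormedAddCommGroup E] [InnerProductSpace ℝ E]
    {m : ℕ} (p : Fin m → E) (s : Set E) (hcv : Convex ℝ s) (u : E) (hu : u ∈ s)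
    (hne : ∀ j, u ≠ p j)
    (hmin : ∀ w ∈ s, ∑ j, ‖u - p j‖ ≤ ∑ j, ‖w - p j‖) :
    (∑ j, (‖u - p j‖)⁻¹ • (p j - u)) ∈ normalCone s u := by
  intro z hz
  set S' : ℝ := ∑ j, (‖u - p j‖)⁻¹ * ⟪u - p j, z - u⟫ with hS'
  set K : ℝ := ∑ j, (2 * ‖u - p j‖)⁻¹ * ‖z - u‖ ^ 2 with hK
  have hKnn : 0 ≤ K := Finset.sum_nonneg fun j _ => by positivity
  have hgoal : ⟪∑ j, (‖u - p j‖)⁻¹ • (p j - u), z - u⟫ = -S' := by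
    rw [sum_inner, hS', ← Finset.sum_neg_distrib]
    refine Finset.sum_congr rfl fun j _ => ?_
    rw [real_inner_smul_left, show p j - u = -(u - p j) by abel, inner_neg_left]
    ring
  rw [hgoal, neg_nonpos]
  -- show 0 ≤ S'
  have hstep : ∀ t : ℝ, 0 < t → t ≤ 1 → 0 ≤ S' + t * K := by
    intro t ht ht1
    have hw : u + t • (z - u) ∈ s := by
      have := hcv hu hz (by linarith : (0:ℝ) ≤ 1 - t) ht.le (by ring)
      convert this using 1
      module
    have hsum := hmin _ hw
    have hper : ∀ j, ‖u + t • (z - u) - p j‖ ≤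
        ‖u - p j‖ + t * ((‖u - p j‖)⁻¹ * ⟪u - p j, z - u⟫)
          + t ^ 2 * ((2 * ‖u - p j‖)⁻¹ * ‖z - u‖ ^ 2) := by
      intro j
      have ha : u - p j ≠ 0 := sub_ne_zero.2 (hne j)
      have := heron_aux_norm (u - p j) (t • (z - u)) ha
      rw [show u - p j + t • (z - u) = u + t • (z - u) - p j by abel] at this
      rw [real_inner_smul_right, norm_smul, Real.norm_eq_abs, abs_of_pos ht] at this
      calc ‖u + t • (z - u) - p j‖ ≤ _ := this
        _ = _ := by ring
    have hsum2 : ∑ j, ‖u + t • (z - u) - p j‖ ≤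
        (∑ j, ‖u - p j‖) + t * S' + t ^ 2 * K := by
      calc ∑ j, ‖u + t • (z - u) - p j‖ ≤ _ := Finset.sum_le_sum fun j _ => hper j
        _ = (∑ j, ‖u - p j‖) + t * S' + t ^ 2 * K := by
            rw [Finset.sum_add_distrib, Finset.sum_add_distrib, hS', hK,
              Finset.mul_sum, Finset.mul_sum]
    have h0 : 0 ≤ t * (S' + t * K) := by nlinarith
    nlinarith
  by_contra hneg
  push_neg at hneg
  rcases eq_or_lt_of_le hKnn with hK0 | hKpos
  · have := hstep 1 one_pos le_rfl
    rw [← hK0] at this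
    linarith
  · have ht0 : 0 < min 1 (-S' / (2 * K)) :=
      lt_min one_pos (div_pos (by linarith) (by linarith))
    have h1 := hstep _ ht0 (min_le_left _ _)
    have h2 : min 1 (-S' / (2 * K)) * K ≤ (-S' / (2 * K)) * K :=
      mul_le_mul_of_nonneg_right (min_le_right _ _) hKnn
    have h3 : (-S' / (2 * K)) * K = -S' / 2 := by field_simp
    linarith

/-- At an optimal solution `Z* = (x, y)` of the generalized (k,m)-Heron problem (with
`S i ∩ C j = ∅`), the vectors `n_{S i} = ∑ j (y j - x i)/‖x i - y j‖` and
`n_{C j} = ∑ i (x i - y j)/‖x i - y j‖` belong to the respective normal cones, and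
the global equilibrium condition `∑ i n_{S i} + ∑ j n_{C j} = 0` holds. -/
theorem generalized_km_Heron_equilibrium
    (n k m : ℕ) (hn : 0 < n) (hk : 0 < k) (hm : 0 < m)
    (S : Fin k → Set (EuclideanSpace ℝ (Fin n)))
    (C : Fin m → Set (EuclideanSpace ℝ (Fin n)))
    (hSne : ∀ i, (S i).Nonempty) (hScl : ∀ i, IsClosed (S i)) (hScv : ∀ i, Convex ℝ (S i))
    (hCne : ∀ j, (C j).Nonempty) (hCcl : ∀ j, IsClosed (C j)) (hCcv : ∀ j, Convex ℝ (C j))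
    (hdisj : ∀ i j, S i ∩ C j = ∅)
    (x : Fin k → EuclideanSpace ℝ (Fin n)) (y : Fin m → EuclideanSpace ℝ (Fin n))
    (hx : ∀ i, x i ∈ S i) (hy : ∀ j, y j ∈ C j)
    (hopt : ∀ (x' : Fin k → EuclideanSpace ℝ (Fin n)) (y' : Fin m → EuclideanSpace ℝ (Fin n)),
      (∀ i, x' i ∈ S i) → (∀ j, y' j ∈ C j) →
      ∑ i, ∑ j, ‖x i - y j‖ ≤ ∑ i, ∑ j, ‖x' i - y' j‖) :
    (∀ i, (∑ j, (‖x i - y j‖)⁻¹ • (y j - x i)) ∈ normalCone (S i) (x i)) ∧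
    (∀ j, (∑ i, (‖x i - y j‖)⁻¹ • (x i - y j)) ∈ normalCone (C j) (y j)) ∧
    (∑ i, ∑ j, (‖x i - y j‖)⁻¹ • (y j - x i)) +
      (∑ j, ∑ i, (‖x i - y j‖)⁻¹ • (x i - y j)) = 0 := by
  have hne : ∀ i j, x i ≠ y j := by
    intro i j h
    have : x i ∈ S i ∩ C j := ⟨hx i, h ▸ hy j⟩
    rw [hdisj i j] at this
    exact this
  refine ⟨?_, ?_, ?_⟩
  · -- normal cone for S i
    intro i
    have hmin : ∀ u ∈ S i, ∑ j, ‖x i - y j‖ ≤ ∑ j, ‖u - y j‖ := by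
      intro u hu
      have h := hopt (Function.update x i u) y
        (fun i' => by
          rcases eq_or_ne i' i with rfl | h'
          · simpa using hu
          · simpa [Function.update_of_ne h'] using hx i') hy
      rw [← Finset.add_sum_erase _ _ (Finset.mem_univ i),
        ← Finset.add_sum_erase _ (fun i' => ∑ j, ‖Function.update x i u i' - y j‖)
          (Finset.mem_univ i)] at h
      have he : ∑ i' ∈ Finset.univ.erase i, ∑ j, ‖Function.update x i u i' - y j‖
          = ∑ i' ∈ Finset.univ.erase i, ∑ j, ‖x i' - y j‖ :=
        Finset.sum_congr rfl fun i' hi' => by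
          rw [Function.update_of_ne (Finset.ne_of_mem_erase hi')]
      rw [he, Function.update_self] at h
      linarith
    exact heron_key y (S i) (hScv i) (x i) (hx i) (hne i) hmin
  · -- normal cone for C j
    intro j
    have hmin : ∀ u ∈ C j, ∑ i, ‖y j - x i‖ ≤ ∑ i, ‖u - x i‖ := by
      intro u hu
      have h := hopt x (Function.update y j u) hx
        (fun j' => by
          rcases eq_or_ne j' j with rfl | h'
          · simpa using hu
          · simpa [Function.update_of_ne h'] using hy j')
      have hcomm : ∑ j', ∑ i, ‖x i - Function.update y j u j'‖
          = ∑ i, ∑ j', ‖x i - Function.update y j u j'‖ := Finset.sum_comm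
      rw [Finset.sum_comm, ← hcomm] at h
      rw [← Finset.add_sum_erase _ _ (Finset.mem_univ j),
        ← Finset.add_sum_erase _ (fun j' => ∑ i, ‖x i - Function.update y j u j'‖)
          (Finset.mem_univ j)] at h
      have he : ∑ j' ∈ Finset.univ.erase j, ∑ i, ‖x i - Function.update y j u j'‖
          = ∑ j' ∈ Finset.univ.erase j, ∑ i, ‖x i - y j'‖ :=
        Finset.sum_congr rfl fun j' hj' => by
          rw [Function.update_of_ne (Finset.ne_of_mem_erase hj')]
      rw [he, Function.update_self] at h
      have h1 : ∑ i, ‖y j - x i‖ = ∑ i, ‖x i - y j‖ :=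
        Finset.sum_congr rfl fun i _ => norm_sub_rev _ _
      have h2 : ∑ i, ‖u - x i‖ = ∑ i, ‖x i - u‖ :=
        Finset.sum_congr rfl fun i _ => norm_sub_rev _ _
      rw [h1, h2]
      linarith
    have := heron_key x (C j) (hCcv j) (y j) (hy j)
      (fun i h => (hne i j) h.symm) hmin
    convert this using 2 with i
    rw [norm_sub_rev]
  · -- equilibrium
    rw [Finset.sum_comm (f := fun j i => (‖x i - y j‖)⁻¹ • (x i - y j)),
      ← Finset.sum_add_distrib]
    refine Finset.sum_eq_zero fun i _ => ?_
    rw [← Finset.sum_add_distrib]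
    refine Finset.sum_eq_zero fun j _ => ?_
    rw [← smul_add, show y j - x i + (x i - y j) = 0 by abel, smul_zero]
end

section
/- The function F : (ℝ^n)^k × (ℝ^n)^m → ℝ defined by F(x,y) = Σ_{i=1}^k Σ_{j=1}^m ‖x_i − y_j‖ is Lipschitz continuous on ℝ^{n(k+m)} (with the product Euclidean norm) with Lipschitz constant G = √(km(k+m)). -/
/-- **Lipschitz continuity of the generalized (k,m)-Heron objective.**
The function `F(x,y) = ∑ i ∑ j ‖x i - y j‖` is Lipschitz on `ℝ^{n(k+m)}` (with the
product Euclidean norm `‖Z‖² = ∑ i ‖x i‖² + ∑ j ‖y j‖²`) with Lipschitz constant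
`G = √(k·m·(k+m))`. -/
theorem generalized_km_Heron_objective_lipschitz
    (n k m : ℕ) (hn : 0 < n) (hk : 0 < k) (hm : 0 < m) :
    ∀ (x x' : Fin k → EuclideanSpace ℝ (Fin n)) (y y' : Fin m → EuclideanSpace ℝ (Fin n)),
      |(∑ i, ∑ j, ‖x i - y j‖) - ∑ i, ∑ j, ‖x' i - y' j‖| ≤
        Real.sqrt ((k : ℝ) * m * (k + m)) *
          Real.sqrt ((∑ i, ‖x i - x' i‖ ^ 2) + ∑ j, ‖y j - y' j‖ ^ 2) := by
  intro x x' y y'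
  set a : Fin k → ℝ := fun i => ‖x i - x' i‖ with ha
  set b : Fin m → ℝ := fun j => ‖y j - y' j‖ with hb
  set A : ℝ := ∑ i, a i ^ 2 with hA
  set B : ℝ := ∑ j, b j ^ 2 with hB
  have ha0 : ∀ i, 0 ≤ a i := fun i => norm_nonneg _
  have hb0 : ∀ j, 0 ≤ b j := fun j => norm_nonneg _
  have hA0 : 0 ≤ A := Finset.sum_nonneg fun i _ => sq_nonneg _
  have hB0 : 0 ≤ B := Finset.sum_nonneg fun j _ => sq_nonneg _
  -- Step 1: pointwise bound and summation
  have step1 : |(∑ i, ∑ j, ‖x i - y j‖) - ∑ i, ∑ j, ‖x' i - y' j‖| ≤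
      (m : ℝ) * (∑ i, a i) + (k : ℝ) * (∑ j, b j) := by
    have h1 : (∑ i, ∑ j, ‖x i - y j‖) - ∑ i, ∑ j, ‖x' i - y' j‖
        = ∑ i, ∑ j, (‖x i - y j‖ - ‖x' i - y' j‖) := by
      rw [← Finset.sum_sub_distrib]
      exact Finset.sum_congr rfl fun i _ => (Finset.sum_sub_distrib _ _).symm
    rw [h1]
    calc |∑ i, ∑ j, (‖x i - y j‖ - ‖x' i - y' j‖)|
        ≤ ∑ i, |∑ j, (‖x i - y j‖ - ‖x' i - y' j‖)| := Finset.abs_sum_le_sum_abs _ _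
      _ ≤ ∑ i, ∑ j, |‖x i - y j‖ - ‖x' i - y' j‖| :=
          Finset.sum_le_sum fun i _ => Finset.abs_sum_le_sum_abs _ _
      _ ≤ ∑ i, ∑ j, (a i + b j) := by
          refine Finset.sum_le_sum fun i _ => Finset.sum_le_sum fun j _ => ?_
          have h2 : |‖x i - y j‖ - ‖x' i - y' j‖| ≤ ‖(x i - y j) - (x' i - y' j)‖ :=
            abs_norm_sub_norm_le _ _
          have h3 : (x i - y j) - (x' i - y' j) = (x i - x' i) - (y j - y' j) := by
            abel
          calc |‖x i - y j‖ - ‖x' i - y' j‖| ≤ ‖(x i - y j) - (x' i - y' j)‖ := h2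
            _ = ‖(x i - x' i) - (y j - y' j)‖ := by rw [h3]
            _ ≤ a i + b j := norm_sub_le _ _
      _ = (m : ℝ) * (∑ i, a i) + (k : ℝ) * (∑ j, b j) := by
          have hin : ∀ i : Fin k, ∑ j, (a i + b j) = (m : ℝ) * a i + ∑ j, b j := by
            intro i
            rw [Finset.sum_add_distrib, Finset.sum_const, Finset.card_univ,
              Fintype.card_fin, nsmul_eq_mul]
          rw [Finset.sum_congr rfl fun i _ => hin i, Finset.sum_add_distrib,
            ← Finset.mul_sum, Finset.sum_const, Finset.card_univ, Fintype.card_fin,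
            nsmul_eq_mul]
  -- Step 2: Cauchy–Schwarz
  have csa : (∑ i, a i) ^ 2 ≤ (k : ℝ) * A := by
    have := sq_sum_le_card_mul_sum_sq (s := Finset.univ) (f := a)
    simpa using this
  have csb : (∑ j, b j) ^ 2 ≤ (m : ℝ) * B := by
    have := sq_sum_le_card_mul_sum_sq (s := Finset.univ) (f := b)
    simpa using this
  have hSa : 0 ≤ ∑ i, a i := Finset.sum_nonneg fun i _ => ha0 i
  have hSb : 0 ≤ ∑ j, b j := Finset.sum_nonneg fun j _ => hb0 j
  set Sa : ℝ := ∑ i, a i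
  set Sb : ℝ := ∑ j, b j
  have hk1 : (1 : ℝ) ≤ k := by exact_mod_cast hk
  have hm1 : (1 : ℝ) ≤ m := by exact_mod_cast hm
  have key : ((m : ℝ) * Sa + (k : ℝ) * Sb) ^ 2 ≤ (k : ℝ) * m * (k + m) * (A + B) := by
    have hk0 : (0:ℝ) ≤ k := le_trans zero_le_one hk1
    have hm0 : (0:ℝ) ≤ m := le_trans zero_le_one hm1
    have hkm : (0:ℝ) ≤ (k:ℝ) * m := mul_nonneg hk0 hm0
    have h1 : (m:ℝ)^2 * Sa^2 ≤ (m:ℝ)^2 * ((k:ℝ) * A) :=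
      mul_le_mul_of_nonneg_left csa (sq_nonneg _)
    have h2 : (k:ℝ)^2 * Sb^2 ≤ (k:ℝ)^2 * ((m:ℝ) * B) :=
      mul_le_mul_of_nonneg_left csb (sq_nonneg _)
    have h3 : (k:ℝ)*m*(2*Sa*Sb) ≤ (k:ℝ)*m*(Sa^2 + Sb^2) :=
      mul_le_mul_of_nonneg_left (by nlinarith [sq_nonneg (Sa - Sb)]) hkm
    have h4 : (k:ℝ)*m*Sa^2 ≤ (k:ℝ)*m*((k:ℝ)*A) := mul_le_mul_of_nonneg_left csa hkm
    have h5 : (k:ℝ)*m*Sb^2 ≤ (k:ℝ)*m*((m:ℝ)*B) := mul_le_mul_of_nonneg_left csb hkm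
    nlinarith [h1, h2, h3, h4, h5]
  have step2 : (m : ℝ) * Sa + (k : ℝ) * Sb ≤
      Real.sqrt ((k : ℝ) * m * (k + m)) * Real.sqrt (A + B) := by
    rw [← Real.sqrt_mul (by positivity) (A + B)]
    have h4 : (m : ℝ) * Sa + (k : ℝ) * Sb = Real.sqrt (((m : ℝ) * Sa + (k : ℝ) * Sb) ^ 2) := by
      rw [Real.sqrt_sq (by positivity)]
    rw [h4]
    exact Real.sqrt_le_sqrt key
  exact le_trans step1 step2
end

section
/- Suppose at least one of the sets S_1, …, S_k, C_1, …, C_m is bounded, so that the set of optimal solutions of the generalized (k,m)-Heron problem is nonempty. Let {Z_t} ⊆ A be generated by the projected subgradient iteration Z_{t+1} = proj_A(Z_t − α_t g_t), where g_t is a subgradient of F at Z_t and the step sizes satisfy α_t > 0, Σ_{t=0}^∞ α_t = ∞, and Σ_{t=0}^∞ α_t² < ∞. Then the sequence {Z_t} converges to some optimal solution of the problem. -/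
open scoped RealInnerProductSpace
open Filter

private lemma aux_quasiFejer (d e : ℕ → ℝ) (hd : ∀ t, 0 ≤ d t) (he : ∀ t, 0 ≤ e t)
    (hes : Summable e) (hrec : ∀ t, d (t + 1) ≤ d t + e t) :
    ∃ l, Tendsto d atTop (nhds l) := by
  set r : ℕ → ℝ := fun t => ∑' s, e (s + t) with hr
  have hr0 : Tendsto r atTop (nhds 0) := tendsto_sum_nat_add e
  have hrnn : ∀ t, 0 ≤ r t := fun t => tsum_nonneg fun s => he _
  have hrs : ∀ t, r t = e t + r (t + 1) := by
    intro t
    have hsum : Summable fun s => e (s + t) := (summable_nat_add_iff t).mpr hes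
    have h2 := Summable.tsum_eq_zero_add hsum
    simp only [zero_add] at h2
    rw [hr]
    simp only []
    rw [h2]
    congr 1
    apply tsum_congr
    intro s
    congr 1
    omega
  have hmono : Antitone fun t => d t + r t := by
    apply antitone_nat_of_succ_le
    intro t
    have h1 := hrec t
    have h2 := hrs t
    show d (t + 1) + r (t + 1) ≤ d t + r t
    linarith
  have hbdd : BddBelow (Set.range fun t => d t + r t) :=
    ⟨0, by rintro x ⟨t, rfl⟩; exact add_nonneg (hd t) (hrnn t)⟩
  have hconv : Tendsto (fun t => d t + r t) atTop (nhds (⨅ t, (d t + r t))) :=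
    tendsto_atTop_ciInf hmono hbdd
  refine ⟨⨅ t, (d t + r t), ?_⟩
  have : Tendsto (fun t => (d t + r t) - r t) atTop (nhds ((⨅ t, (d t + r t)) - 0)) :=
    hconv.sub hr0
  simpa using this

private lemma aux_coord {ι : Type*} [Fintype ι] {β : ι → Type*}
    [∀ i, SeminormedAddCommGroup (β i)] (x : PiLp 2 β) (i : ι) : ‖x i‖ ≤ ‖x‖ := by
  have h := PiLp.norm_sq_eq_of_L2 β x
  have h1 : ‖x i‖ ^ 2 ≤ ‖x‖ ^ 2 := by
    rw [h]
    exact Finset.single_le_sum (fun j _ => sq_nonneg ‖x j‖) (Finset.mem_univ i)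
  exact le_of_pow_le_pow_left₀ two_ne_zero (norm_nonneg _) h1

set_option maxHeartbeats 1000000 in
/-- **Convergence of the iterates of the PSA for the (k,m)-Heron problem.**
The variable `Z = (x, y)` is encoded as an element of the Euclidean product space
`PiLp 2 (fun _ : Fin k ⊕ Fin m => ℝⁿ)`, with `Z (inl i) = x i` and `Z (inr j) = y j`.
If at least one of the sets is bounded (so the set of optimal solutions is nonempty),
and `{Z t} ⊆ A` is generated by `Z (t+1) = proj_A (Z t - α t • g t)` with subgradients
`g t` of `F` at `Z t` and step sizes `α t > 0`, `∑ α t = ∞`, `∑ α t ² < ∞`, then the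
sequence `Z t` converges to some optimal solution of the problem. -/
theorem generalized_km_Heron_PSA_iterate_convergence
    (n k m : ℕ) (hn : 0 < n) (hk : 0 < k) (hm : 0 < m)
    (S : Fin k → Set (EuclideanSpace ℝ (Fin n)))
    (C : Fin m → Set (EuclideanSpace ℝ (Fin n)))
    (hSne : ∀ i, (S i).Nonempty) (hScl : ∀ i, IsClosed (S i)) (hScv : ∀ i, Convex ℝ (S i))
    (hCne : ∀ j, (C j).Nonempty) (hCcl : ∀ j, IsClosed (C j)) (hCcv : ∀ j, Convex ℝ (C j))
    (hbdd : (∃ i, Bornology.IsBounded (S i)) ∨ (∃ j, Bornology.IsBounded (C j)))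
    (A : Set (PiLp 2 (fun _ : Fin k ⊕ Fin m => EuclideanSpace ℝ (Fin n))))
    (hA : A = {Z | (∀ i, Z (Sum.inl i) ∈ S i) ∧ (∀ j, Z (Sum.inr j) ∈ C j)})
    (F : PiLp 2 (fun _ : Fin k ⊕ Fin m => EuclideanSpace ℝ (Fin n)) → ℝ)
    (hF : ∀ Z, F Z = ∑ i, ∑ j, ‖Z (Sum.inl i) - Z (Sum.inr j)‖)
    (Z g : ℕ → PiLp 2 (fun _ : Fin k ⊕ Fin m => EuclideanSpace ℝ (Fin n)))
    (α : ℕ → ℝ)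
    (hαpos : ∀ t, 0 < α t)
    (hαdiv : Tendsto (fun N => ∑ t ∈ Finset.range N, α t) atTop atTop)
    (hαsq : Summable fun t => (α t) ^ 2)
    (hZmem : ∀ t, Z t ∈ A)
    (hg : ∀ t W, F (Z t) + ⟪g t, W - Z t⟫ ≤ F W)
    (hproj : ∀ t, ∀ w ∈ A, ‖Z (t + 1) - (Z t - α t • g t)‖ ≤ ‖w - (Z t - α t • g t)‖) :
    ∃ Zopt, Zopt ∈ A ∧ (∀ W ∈ A, F Zopt ≤ F W) ∧ Tendsto Z atTop (nhds Zopt) := by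
  -- closedness of A
  have hAcl : IsClosed A := by
    rw [hA]
    have : {W : PiLp 2 (fun _ : Fin k ⊕ Fin m => EuclideanSpace ℝ (Fin n)) |
        (∀ i, W (Sum.inl i) ∈ S i) ∧ (∀ j, W (Sum.inr j) ∈ C j)} =
        (⋂ i, (fun W : PiLp 2 (fun _ : Fin k ⊕ Fin m => EuclideanSpace ℝ (Fin n)) =>
          W (Sum.inl i)) ⁻¹' S i) ∩
        ⋂ j, (fun W : PiLp 2 (fun _ : Fin k ⊕ Fin m => EuclideanSpace ℝ (Fin n)) =>
          W (Sum.inr j)) ⁻¹' C j := by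
      ext W; simp [Set.mem_iInter]
    rw [this]
    exact (isClosed_iInter fun i =>
        (hScl i).preimage ((continuous_apply (Sum.inl i : Fin k ⊕ Fin m)).comp (PiLp.continuous_ofLp 2 _))).inter
      (isClosed_iInter fun j =>
        (hCcl j).preimage ((continuous_apply (Sum.inr j : Fin k ⊕ Fin m)).comp (PiLp.continuous_ofLp 2 _)))
  -- convexity of A
  have hAcv : Convex ℝ A := by
    rw [hA]
    intro x hx y hy a b ha hb hab
    constructor
    · intro i
      have h : (a • x + b • y) (Sum.inl i) = a • x (Sum.inl i) + b • y (Sum.inl i) := rfl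
      rw [h]
      exact hScv i (hx.1 i) (hy.1 i) ha hb hab
    · intro j
      have h : (a • x + b • y) (Sum.inr j) = a • x (Sum.inr j) + b • y (Sum.inr j) := rfl
      rw [h]
      exact hCcv j (hx.2 j) (hy.2 j) ha hb hab
  -- continuity of F
  have hFc : Continuous F := by
    have h : F = fun W => ∑ i, ∑ j, ‖W (Sum.inl i) - W (Sum.inr j)‖ := funext hF
    rw [h]
    exact continuous_finset_sum _ fun i _ => continuous_finset_sum _ fun j _ =>
      ((((continuous_apply (Sum.inl i : Fin k ⊕ Fin m)).comp (PiLp.continuous_ofLp 2 _))).sub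
        ((continuous_apply (Sum.inr j : Fin k ⊕ Fin m)).comp (PiLp.continuous_ofLp 2 _))).norm
  have hFnn : ∀ W, 0 ≤ F W := by
    intro W; rw [hF]
    exact Finset.sum_nonneg fun i _ => Finset.sum_nonneg fun j _ => norm_nonneg _
  have hterm : ∀ W i j, ‖W (Sum.inl i) - W (Sum.inr j)‖ ≤ F W := by
    intro W i j
    rw [hF]
    calc ‖W (Sum.inl i) - W (Sum.inr j)‖
        ≤ ∑ j', ‖W (Sum.inl i) - W (Sum.inr j')‖ :=
          Finset.single_le_sum (f := fun j' => ‖W (Sum.inl i) - W (Sum.inr j')‖)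
            (fun j' _ => norm_nonneg _) (Finset.mem_univ j)
      _ ≤ ∑ i', ∑ j', ‖W (Sum.inl i') - W (Sum.inr j')‖ :=
          Finset.single_le_sum (f := fun i' => ∑ j', ‖W (Sum.inl i') - W (Sum.inr j')‖)
            (fun i' _ => Finset.sum_nonneg fun j' _ => norm_nonneg _) (Finset.mem_univ i)
  -- Lipschitz-type bound
  set L : ℝ := 2 * (k * m : ℕ) with hL
  have hLnn : 0 ≤ L := by positivity
  have hLip : ∀ W V, F W ≤ F V + L * ‖W - V‖ := by
    intro W V
    rw [hF W, hF V]
    have key : ∀ i j, ‖W (Sum.inl i) - W (Sum.inr j)‖ ≤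
        ‖V (Sum.inl i) - V (Sum.inr j)‖ + 2 * ‖W - V‖ := by
      intro i j
      have h1 : ‖W (Sum.inl i) - W (Sum.inr j)‖ - ‖V (Sum.inl i) - V (Sum.inr j)‖ ≤
          ‖(W (Sum.inl i) - W (Sum.inr j)) - (V (Sum.inl i) - V (Sum.inr j))‖ :=
        norm_sub_norm_le _ _
      have h2 : (W (Sum.inl i) - W (Sum.inr j)) - (V (Sum.inl i) - V (Sum.inr j)) =
          (W - V) (Sum.inl i) - (W - V) (Sum.inr j) := by
        show _ = (W (Sum.inl i) - V (Sum.inl i)) - (W (Sum.inr j) - V (Sum.inr j))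
        abel
      have h3 : ‖(W - V) (Sum.inl i) - (W - V) (Sum.inr j)‖ ≤
          ‖(W - V) (Sum.inl i)‖ + ‖(W - V) (Sum.inr j)‖ := norm_sub_le _ _
      have h4 := aux_coord (W - V) (Sum.inl i)
      have h5 := aux_coord (W - V) (Sum.inr j)
      rw [h2] at h1
      linarith
    calc (∑ i, ∑ j, ‖W (Sum.inl i) - W (Sum.inr j)‖)
        ≤ ∑ i, ∑ j, (‖V (Sum.inl i) - V (Sum.inr j)‖ + 2 * ‖W - V‖) :=
          Finset.sum_le_sum fun i _ => Finset.sum_le_sum fun j _ => key i j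
      _ = (∑ i, ∑ j, ‖V (Sum.inl i) - V (Sum.inr j)‖) + L * ‖W - V‖ := by
          simp [Finset.sum_add_distrib, hL]
          ring
  -- subgradient bound
  have hgb : ∀ t, ‖g t‖ ≤ L := by
    intro t
    have h1 := hg t (Z t + g t)
    have h2 : (Z t + g t) - Z t = g t := by abel
    rw [h2] at h1
    rw [real_inner_self_eq_norm_sq] at h1
    have h4 := hLip (Z t + g t) (Z t)
    rw [show (Z t + g t) - Z t = g t from by abel] at h4
    have h6 : ‖g t‖ ^ 2 ≤ L * ‖g t‖ := by linarith
    rcases eq_or_lt_of_le (norm_nonneg (g t)) with h | h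
    · rw [← h]; exact hLnn
    · nlinarith
  -- existence of a minimizer
  have hAne : A.Nonempty := by
    refine ⟨WithLp.toLp 2 (fun s : Fin k ⊕ Fin m => (Sum.rec (fun i => (hSne i).choose) (fun j => (hCne j).choose) s : EuclideanSpace ℝ (Fin n))), ?_⟩
    rw [hA]
    exact ⟨fun i => (hSne i).choose_spec, fun j => (hCne j).choose_spec⟩
  obtain ⟨W0, hW0⟩ := hAne
  set c : ℝ := F W0 with hc
  have hc0 : 0 ≤ c := hFnn W0
  set B : Set (PiLp 2 (fun _ : Fin k ⊕ Fin m => EuclideanSpace ℝ (Fin n))) :=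
    A ∩ F ⁻¹' Set.Iic c with hB
  have hW0B : W0 ∈ B := ⟨hW0, Set.mem_preimage.mpr (Set.mem_Iic.mpr le_rfl)⟩
  have hBcl : IsClosed B := hAcl.inter (isClosed_Iic.preimage hFc)
  have hRex : ∃ R, ∀ W ∈ B, ∀ s, ‖W s‖ ≤ R := by
    rcases hbdd with ⟨i0, hb⟩ | ⟨j0, hb⟩
    · obtain ⟨M, hM⟩ := hb.subset_closedBall 0
      refine ⟨2 * c + M, ?_⟩
      rintro W ⟨hWA, hWc⟩ s
      rw [hA] at hWA
      have hMi : ‖W (Sum.inl i0)‖ ≤ M := by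
        have := hM (hWA.1 i0)
        rwa [Metric.mem_closedBall, dist_zero_right] at this
      have hWFc : F W ≤ c := hWc
      have hr : ∀ j, ‖W (Sum.inr j)‖ ≤ c + M := by
        intro j
        have h1 : ‖W (Sum.inr j)‖ ≤ ‖W (Sum.inl i0) - W (Sum.inr j)‖ + ‖W (Sum.inl i0)‖ := by
          have htr := norm_add_le (W (Sum.inr j) - W (Sum.inl i0)) (W (Sum.inl i0))
          rw [norm_sub_rev] at htr
          calc ‖W (Sum.inr j)‖
              = ‖W (Sum.inr j) - W (Sum.inl i0) + W (Sum.inl i0)‖ := by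
                rw [show W (Sum.inr j) - W (Sum.inl i0) + W (Sum.inl i0) = W (Sum.inr j) from by abel]
            _ ≤ ‖W (Sum.inl i0) - W (Sum.inr j)‖ + ‖W (Sum.inl i0)‖ := htr
        linarith [(hterm W i0 j).trans hWFc]
      cases s with
      | inr j => linarith [hr j]
      | inl i =>
        set j0 : Fin m := ⟨0, hm⟩
        have h1 : ‖W (Sum.inl i)‖ ≤ ‖W (Sum.inl i) - W (Sum.inr j0)‖ + ‖W (Sum.inr j0)‖ := by
          have htr := norm_add_le (W (Sum.inl i) - W (Sum.inr j0)) (W (Sum.inr j0))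
          calc ‖W (Sum.inl i)‖
              = ‖W (Sum.inl i) - W (Sum.inr j0) + W (Sum.inr j0)‖ := by
                rw [show W (Sum.inl i) - W (Sum.inr j0) + W (Sum.inr j0) = W (Sum.inl i) from by abel]
            _ ≤ ‖W (Sum.inl i) - W (Sum.inr j0)‖ + ‖W (Sum.inr j0)‖ := htr
        linarith [(hterm W i j0).trans hWFc, hr j0]
    · obtain ⟨M, hM⟩ := hb.subset_closedBall 0
      refine ⟨2 * c + M, ?_⟩
      rintro W ⟨hWA, hWc⟩ s
      rw [hA] at hWA
      have hMj : ‖W (Sum.inr j0)‖ ≤ M := by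
        have := hM (hWA.2 j0)
        rwa [Metric.mem_closedBall, dist_zero_right] at this
      have hWFc : F W ≤ c := hWc
      have hl : ∀ i, ‖W (Sum.inl i)‖ ≤ c + M := by
        intro i
        have h1 : ‖W (Sum.inl i)‖ ≤ ‖W (Sum.inl i) - W (Sum.inr j0)‖ + ‖W (Sum.inr j0)‖ := by
          have htr := norm_add_le (W (Sum.inl i) - W (Sum.inr j0)) (W (Sum.inr j0))
          calc ‖W (Sum.inl i)‖
              = ‖W (Sum.inl i) - W (Sum.inr j0) + W (Sum.inr j0)‖ := by
                rw [show W (Sum.inl i) - W (Sum.inr j0) + W (Sum.inr j0) = W (Sum.inl i) from by abel]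
            _ ≤ ‖W (Sum.inl i) - W (Sum.inr j0)‖ + ‖W (Sum.inr j0)‖ := htr
        linarith [(hterm W i j0).trans hWFc]
      cases s with
      | inl i => linarith [hl i]
      | inr j =>
        set i0 : Fin k := ⟨0, hk⟩
        have h1 : ‖W (Sum.inr j)‖ ≤ ‖W (Sum.inl i0) - W (Sum.inr j)‖ + ‖W (Sum.inl i0)‖ := by
          have htr := norm_add_le (W (Sum.inr j) - W (Sum.inl i0)) (W (Sum.inl i0))
          rw [norm_sub_rev] at htr
          calc ‖W (Sum.inr j)‖
              = ‖W (Sum.inr j) - W (Sum.inl i0) + W (Sum.inl i0)‖ := by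
                rw [show W (Sum.inr j) - W (Sum.inl i0) + W (Sum.inl i0) = W (Sum.inr j) from by abel]
            _ ≤ ‖W (Sum.inl i0) - W (Sum.inr j)‖ + ‖W (Sum.inl i0)‖ := htr
        linarith [(hterm W i0 j).trans hWFc, hl i0]
  obtain ⟨R, hR⟩ := hRex
  have hBbd : Bornology.IsBounded B := by
    rw [Metric.isBounded_iff_subset_closedBall 0]
    refine ⟨Real.sqrt ((k + m : ℝ) * (max R 0) ^ 2), fun W hW => ?_⟩
    rw [Metric.mem_closedBall, dist_zero_right]
    apply Real.le_sqrt_of_sq_le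
    rw [PiLp.norm_sq_eq_of_L2]
    calc (∑ s, ‖W s‖ ^ 2)
        ≤ ∑ _s : Fin k ⊕ Fin m, (max R 0) ^ 2 :=
          Finset.sum_le_sum fun s _ =>
            pow_le_pow_left₀ (norm_nonneg _) ((hR W hW s).trans (le_max_left _ _)) 2
      _ = (k + m : ℝ) * (max R 0) ^ 2 := by
          rw [Finset.sum_const, Finset.card_univ, Fintype.card_sum, Fintype.card_fin,
            Fintype.card_fin, nsmul_eq_mul]
          push_cast
          ring
  have hBcp : IsCompact B := Metric.isCompact_of_isClosed_isBounded hBcl hBbd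
  obtain ⟨Zmin, hZminB, hmin⟩ := hBcp.exists_isMinOn ⟨W0, hW0B⟩ hFc.continuousOn
  have hZminA : Zmin ∈ A := hZminB.1
  have hopt : ∀ W ∈ A, F Zmin ≤ F W := by
    intro W hWA
    by_cases hWc : F W ≤ c
    · exact isMinOn_iff.mp hmin W ⟨hWA, hWc⟩
    · have h1 : F Zmin ≤ c := hZminB.2
      linarith [not_le.mp hWc]
  -- key recursion inequality
  have hkey : ∀ (t : ℕ), ∀ Zs ∈ A, ‖Z (t + 1) - Zs‖ ^ 2 ≤
      ‖Z t - Zs‖ ^ 2 - 2 * α t * (F (Z t) - F Zs) + (α t) ^ 2 * L ^ 2 := by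
    intro t Zs hZs
    set u := Z t - α t • g t with hu
    haveI : Nonempty ↑A := ⟨⟨Z t, hZmem t⟩⟩
    have hproj2 : ‖u - Z (t + 1)‖ = ⨅ w : A, ‖u - w‖ := by
      apply le_antisymm
      · apply le_ciInf
        rintro ⟨w, hw⟩
        rw [norm_sub_rev, norm_sub_rev u w]
        exact hproj t w hw
      · exact ciInf_le ⟨0, by rintro x ⟨w, rfl⟩; exact norm_nonneg _⟩
          (⟨Z (t + 1), hZmem (t + 1)⟩ : A)
    have hvar := (norm_eq_iInf_iff_real_inner_le_zero hAcv (hZmem (t + 1))).mp hproj2 Zs hZs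
    have h1 : ‖u - Zs‖ ^ 2 =
        ‖u - Z (t + 1)‖ ^ 2 + 2 * ⟪u - Z (t + 1), Z (t + 1) - Zs⟫ + ‖Z (t + 1) - Zs‖ ^ 2 := by
      have h := norm_add_sq_real (u - Z (t + 1)) (Z (t + 1) - Zs)
      rw [show (u - Z (t + 1)) + (Z (t + 1) - Zs) = u - Zs from by abel] at h
      exact h
    have h2 : ⟪u - Z (t + 1), Z (t + 1) - Zs⟫ = -⟪u - Z (t + 1), Zs - Z (t + 1)⟫ := by
      rw [← inner_neg_right]
      congr 1
      abel
    have h3 : ‖Z (t + 1) - Zs‖ ^ 2 ≤ ‖u - Zs‖ ^ 2 := by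
      rw [h1, h2]
      have hnn : (0 : ℝ) ≤ ‖u - Z (t + 1)‖ ^ 2 := sq_nonneg _
      linarith
    have h4 : ‖u - Zs‖ ^ 2 =
        ‖Z t - Zs‖ ^ 2 - 2 * α t * ⟪g t, Z t - Zs⟫ + (α t) ^ 2 * ‖g t‖ ^ 2 := by
      rw [show u - Zs = (Z t - Zs) - α t • g t from by rw [hu]; abel]
      rw [norm_sub_sq_real, real_inner_smul_right, norm_smul, real_inner_comm]
      simp only [Real.norm_eq_abs, mul_pow, sq_abs]
      ring
    have h5 : F (Z t) - F Zs ≤ ⟪g t, Z t - Zs⟫ := by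
      have h := hg t Zs
      have h6 : ⟪g t, Zs - Z t⟫ = -⟪g t, Z t - Zs⟫ := by
        rw [← inner_neg_right]
        congr 1
        abel
      rw [h6] at h
      linarith
    have h7 : ‖g t‖ ^ 2 ≤ L ^ 2 := pow_le_pow_left₀ (norm_nonneg _) (hgb t) 2
    have h8 : α t * (F (Z t) - F Zs) ≤ α t * ⟪g t, Z t - Zs⟫ :=
      mul_le_mul_of_nonneg_left h5 (hαpos t).le
    have h9 : (α t) ^ 2 * ‖g t‖ ^ 2 ≤ (α t) ^ 2 * L ^ 2 :=
      mul_le_mul_of_nonneg_left h7 (sq_nonneg _)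
    linarith
  -- summable error
  set e : ℕ → ℝ := fun t => (α t) ^ 2 * L ^ 2 with he
  have hes : Summable e := hαsq.mul_right _
  have henn : ∀ t, 0 ≤ e t := fun t => mul_nonneg (sq_nonneg _) (sq_nonneg _)
  -- boundedness of the iterates
  set d : ℕ → ℝ := fun t => ‖Z t - Zmin‖ ^ 2 with hd
  have hdnn : ∀ t, 0 ≤ d t := fun t => sq_nonneg _
  have hdrec : ∀ t, d (t + 1) ≤ d t + e t := by
    intro t
    have h := hkey t Zmin hZminA
    have h2 : 0 ≤ F (Z t) - F Zmin := sub_nonneg.mpr (hopt (Z t) (hZmem t))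
    have h3 : 0 ≤ 2 * α t * (F (Z t) - F Zmin) :=
      mul_nonneg (by linarith [hαpos t]) h2
    simp only [hd, he]
    linarith
  have hdbd' : ∀ t, d t ≤ d 0 + ∑ s ∈ Finset.range t, e s := by
    intro t
    induction t with
    | zero => simp
    | succ t ih =>
      rw [Finset.sum_range_succ]
      linarith [hdrec t]
  have hdbd : ∀ t, d t ≤ d 0 + ∑' s, e s := by
    intro t
    have := Summable.sum_le_tsum (Finset.range t) (fun s _ => henn s) hes
    linarith [hdbd' t]
  set R0 : ℝ := Real.sqrt (d 0 + ∑' s, e s) with hR0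
  have hZbd : ∀ t, Z t ∈ Metric.closedBall Zmin R0 := by
    intro t
    rw [Metric.mem_closedBall, dist_eq_norm]
    exact Real.le_sqrt_of_sq_le (hdbd t)
  -- F (Z t) comes close to the optimal value infinitely often
  have hfreq : ∀ ε > (0 : ℝ), ∀ T, ∃ t, T ≤ t ∧ F (Z t) < F Zmin + ε := by
    intro ε hε T
    by_contra hcon
    push_neg at hcon
    have hstep : ∀ N, T ≤ N →
        d N + 2 * ε * ∑ t ∈ Finset.Ico T N, α t ≤ d T + ∑ t ∈ Finset.Ico T N, e t := by
      intro N hTN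
      induction N, hTN using Nat.le_induction with
      | base => simp
      | succ N hTN ih =>
        have h := hkey N Zmin hZminA
        have h2 : ε ≤ F (Z N) - F Zmin := by
          have := hcon N hTN
          linarith
        have h3 : 2 * α N * ε ≤ 2 * α N * (F (Z N) - F Zmin) :=
          mul_le_mul_of_nonneg_left h2 (by linarith [hαpos N])
        rw [Finset.sum_Ico_succ_top hTN, Finset.sum_Ico_succ_top hTN]
        simp only [hd, he] at h ih ⊢
        linarith [hαpos N]
    have hbound : ∀ N, T ≤ N →
        ∑ t ∈ Finset.Ico T N, α t ≤ (d T + ∑' s, e s) / (2 * ε) := by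
      intro N hTN
      have h1 := hstep N hTN
      have h2 : ∑ t ∈ Finset.Ico T N, e t ≤ ∑' s, e s := by
        have := Summable.sum_le_tsum (Finset.Ico T N) (fun s _ => henn s) hes
        linarith
      have h3 := hdnn N
      rw [le_div_iff₀ (by positivity)]
      linarith
    obtain ⟨N0, hN0⟩ := (tendsto_atTop.mp hαdiv
      (∑ t ∈ Finset.range T, α t + (d T + ∑' s, e s) / (2 * ε) + 1)).exists_forall_of_atTop
    set N : ℕ := max T N0
    have hTN : T ≤ N := le_max_left _ _
    have h1 := hbound N hTN
    have h2 := hN0 N (le_max_right _ _)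
    have h3 : ∑ t ∈ Finset.range T, α t + ∑ t ∈ Finset.Ico T N, α t =
        ∑ t ∈ Finset.range N, α t := Finset.sum_range_add_sum_Ico _ hTN
    linarith
  -- select a subsequence approaching the optimal value
  have hsel : ∀ p : ℕ, ∃ t, p ≤ t ∧ F (Z t) < F Zmin + 1 / ((p : ℝ) + 1) :=
    fun p => hfreq (1 / ((p : ℝ) + 1)) (by positivity) p
  choose φ hφ1 hφ2 using hsel
  have hφtop : Tendsto φ atTop atTop := tendsto_atTop_mono hφ1 tendsto_id
  have hFφ : Tendsto (fun p => F (Z (φ p))) atTop (nhds (F Zmin)) := by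
    apply tendsto_of_tendsto_of_tendsto_of_le_of_le (g := fun _ => F Zmin)
      (h := fun p : ℕ => F Zmin + 1 / ((p : ℝ) + 1))
    · exact tendsto_const_nhds
    · have h := tendsto_one_div_add_atTop_nhds_zero_nat (𝕜 := ℝ)
      simpa using tendsto_const_nhds.add h
    · intro p
      exact hopt _ (hZmem _)
    · intro p
      exact (hφ2 p).le
  -- extract a convergent subsequence
  obtain ⟨Zh, _, ψ, hψmono, hψtend⟩ :=
    tendsto_subseq_of_bounded Metric.isBounded_closedBall (fun p => hZbd (φ p))
  have hZhA : Zh ∈ A := hAcl.mem_of_tendsto hψtend (Eventually.of_forall fun q => hZmem _)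
  have hφψtop : Tendsto (fun q => φ (ψ q)) atTop atTop := hφtop.comp hψmono.tendsto_atTop
  have hFZh : F Zh = F Zmin := by
    have h1 : Tendsto (fun q => F (Z (φ (ψ q)))) atTop (nhds (F Zh)) :=
      (hFc.tendsto Zh).comp hψtend
    have h2 : Tendsto (fun q => F (Z (φ (ψ q)))) atTop (nhds (F Zmin)) :=
      hFφ.comp hψmono.tendsto_atTop
    exact tendsto_nhds_unique h1 h2
  have hZhopt : ∀ W ∈ A, F Zh ≤ F W := fun W hW => hFZh ▸ hopt W hW
  -- convergence of the whole sequence to Zh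
  set d' : ℕ → ℝ := fun t => ‖Z t - Zh‖ ^ 2 with hd'
  have hd'rec : ∀ t, d' (t + 1) ≤ d' t + e t := by
    intro t
    have h := hkey t Zh hZhA
    have h2 : 0 ≤ F (Z t) - F Zh := sub_nonneg.mpr (hZhopt (Z t) (hZmem t))
    have h3 : 0 ≤ 2 * α t * (F (Z t) - F Zh) := mul_nonneg (by linarith [hαpos t]) h2
    simp only [hd', he]
    linarith
  obtain ⟨l, hl⟩ := aux_quasiFejer d' e (fun t => sq_nonneg _) henn hes hd'rec
  have hsub : Tendsto (fun q => d' (φ (ψ q))) atTop (nhds l) := hl.comp hφψtop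
  have hsub0 : Tendsto (fun q => d' (φ (ψ q))) atTop (nhds 0) := by
    have hcont : Continuous fun x : PiLp 2 (fun _ : Fin k ⊕ Fin m =>
        EuclideanSpace ℝ (Fin n)) => ‖x - Zh‖ ^ 2 :=
      ((continuous_id.sub continuous_const).norm).pow 2
    have h := (hcont.tendsto Zh).comp hψtend
    simpa [hd', Function.comp_def] using h
  have hl0 : l = 0 := tendsto_nhds_unique hsub hsub0
  rw [hl0] at hl
  have hnorm0 : Tendsto (fun t => ‖Z t - Zh‖) atTop (nhds 0) := by
    have h := (Real.continuous_sqrt.tendsto 0).comp hl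
    simp only [Function.comp_def, Real.sqrt_zero] at h
    have heq : (fun t => Real.sqrt (d' t)) = fun t => ‖Z t - Zh‖ := by
      funext t
      exact Real.sqrt_sq (norm_nonneg _)
    rwa [heq] at h
  refine ⟨Zh, hZhA, hZhopt, ?_⟩
  rw [tendsto_iff_norm_sub_tendsto_zero]
  exact hnorm0
end

section
/- In ℝ², let S_1 be the closed disc of radius 2 centered at (−6,6), S_2 the closed disc of radius 2 centered at (6,6), C_1 the closed disc of radius 1 centered at (−2,6), and C_2 the closed disc of radius 1 centered at (2,6). Then the minimum of F(x_1,x_2,y_1,y_2) = ‖x_1−y_1‖ + ‖x_1−y_2‖ + ‖x_2−y_1‖ + ‖x_2−y_2‖ over x_1 ∈ S_1, x_2 ∈ S_2, y_1 ∈ C_1, y_2 ∈ C_2 equals 16, and it is attained at more than one feasible point; for instance, both (x_1,x_2,y_1,y_2) = ((−4,6),(4,6),(−2,6),(2,6)) and ((−4,6),(4,6),(−1,6),(1,6)) are optimal. -/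
/-- The point `(a, b)` of the Euclidean plane `ℝ²`. -/
noncomputable def pt (a b : ℝ) : EuclideanSpace ℝ (Fin 2) :=
  (WithLp.equiv 2 (Fin 2 → ℝ)).symm ![a, b]

lemma pt_sub (a b c d : ℝ) : pt a b - pt c d = pt (a - c) (b - d) := by
  unfold pt
  ext i
  fin_cases i <;> simp [WithLp.equiv_symm_apply, PiLp.toLp_apply]

lemma norm_pt (a b : ℝ) : ‖pt a b‖ = Real.sqrt (a ^ 2 + b ^ 2) := by
  rw [EuclideanSpace.norm_eq]
  unfold pt
  simp [Fin.sum_univ_two, WithLp.equiv_symm_apply, PiLp.toLp_apply, sq_abs]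

lemma dist_pt (a b c d : ℝ) : dist (pt a b) (pt c d) = Real.sqrt ((a - c) ^ 2 + (b - d) ^ 2) := by
  rw [dist_eq_norm, pt_sub, norm_pt]

lemma norm_pt_horiz (a c : ℝ) : ‖pt a 6 - pt c 6‖ = |a - c| := by
  rw [pt_sub, norm_pt]
  simp [Real.sqrt_sq_eq_abs]

/-- **An instance with multiple optimal solutions.**  In `ℝ²`, with `S₁, S₂` the closed
discs of radius 2 centered at `(-6,6)` and `(6,6)`, and `C₁, C₂` the closed discs of
radius 1 centered at `(-2,6)` and `(2,6)`, the minimum of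
`F = ‖x₁-y₁‖ + ‖x₁-y₂‖ + ‖x₂-y₁‖ + ‖x₂-y₂‖` over `xᵢ ∈ Sᵢ, yⱼ ∈ Cⱼ` is `16`, and it
is attained at (at least) the two distinct feasible points
`((-4,6),(4,6),(-2,6),(2,6))` and `((-4,6),(4,6),(-1,6),(1,6))`. -/
theorem heron_22_example_multiple_solutions :
    (∀ x₁ ∈ Metric.closedBall (pt (-6) 6) 2, ∀ x₂ ∈ Metric.closedBall (pt 6 6) 2,
      ∀ y₁ ∈ Metric.closedBall (pt (-2) 6) 1, ∀ y₂ ∈ Metric.closedBall (pt 2 6) 1,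
        (16 : ℝ) ≤ ‖x₁ - y₁‖ + ‖x₁ - y₂‖ + ‖x₂ - y₁‖ + ‖x₂ - y₂‖) ∧
    (pt (-4) 6 ∈ Metric.closedBall (pt (-6) 6) 2 ∧
     pt 4 6 ∈ Metric.closedBall (pt 6 6) 2 ∧
     pt (-2) 6 ∈ Metric.closedBall (pt (-2) 6) 1 ∧
     pt 2 6 ∈ Metric.closedBall (pt 2 6) 1 ∧
     ‖pt (-4) 6 - pt (-2) 6‖ + ‖pt (-4) 6 - pt 2 6‖ +
       ‖pt 4 6 - pt (-2) 6‖ + ‖pt 4 6 - pt 2 6‖ = 16) ∧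
    (pt (-1) 6 ∈ Metric.closedBall (pt (-2) 6) 1 ∧
     pt 1 6 ∈ Metric.closedBall (pt 2 6) 1 ∧
     ‖pt (-4) 6 - pt (-1) 6‖ + ‖pt (-4) 6 - pt 1 6‖ +
       ‖pt 4 6 - pt (-1) 6‖ + ‖pt 4 6 - pt 1 6‖ = 16) ∧
    ((pt (-4) 6, pt 4 6, pt (-2) 6, pt 2 6) ≠ (pt (-4) 6, pt 4 6, pt (-1) 6, pt 1 6)) := by
  refine ⟨?_, ⟨?_, ?_, ?_, ?_, ?_⟩, ⟨?_, ?_, ?_⟩, ?_⟩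
  · intro x₁ hx₁ x₂ hx₂ y₁ hy₁ y₂ hy₂
    rw [Metric.mem_closedBall] at hx₁ hx₂ hy₁ hy₂
    have hc : dist (pt (-6) 6) (pt 6 6) = 12 := by
      rw [dist_pt]; norm_num
    have h12 : (12 : ℝ) ≤ dist x₁ x₂ + 4 := by
      have := dist_triangle4 (pt (-6) 6) x₁ x₂ (pt 6 6)
      rw [dist_comm (pt (-6) 6) x₁] at this
      linarith [hc ▸ this]
    have h1 : dist x₁ x₂ ≤ dist x₁ y₁ + dist y₁ x₂ := dist_triangle _ _ _
    have h2 : dist x₁ x₂ ≤ dist x₁ y₂ + dist y₂ x₂ := dist_triangle _ _ _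
    rw [dist_comm y₁ x₂] at h1
    rw [dist_comm y₂ x₂] at h2
    simp only [← dist_eq_norm]
    linarith
  · rw [Metric.mem_closedBall, dist_pt]; norm_num
  · rw [Metric.mem_closedBall, dist_pt]; norm_num
  · simp
  · simp
  · rw [norm_pt_horiz, norm_pt_horiz, norm_pt_horiz, norm_pt_horiz]; norm_num
  · rw [Metric.mem_closedBall, dist_pt]; norm_num
  · rw [Metric.mem_closedBall, dist_pt]; norm_num
  · rw [norm_pt_horiz, norm_pt_horiz, norm_pt_horiz, norm_pt_horiz]; norm_num
  · intro h
    have := congrArg (fun p => p.2.2.1 0) h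
    simp only [pt, WithLp.equiv_symm_apply, PiLp.toLp_apply] at this
    norm_num at this
end
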